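/- arXiv:1612.00519 — 7 statements merged into one kernel-verified Lean document; each statement's English description precedes it below -/
import Mathlib

section
/- There exists a constant c > 0 such that every sequence of Leja points z₁, z₂, … on [−1,1] is well separated: for every n ≥ 2 and all 1 ≤ j, k ≤ n with j ≠ k one has |z_k − z_j| ≥ c · ρ_{1/n}(z_k), where ρ_{1/n}(z_k) is the distance (in ℂ) from z_k to the ellipse I_{1/n}. -/
/-- `z : ℕ → ℝ` (indices `1, 2, …`) is a sequence of Leja points on `[-1,1]`:
`z 1 ∈ [-1,1]` is arbitrary, and for `n ≥ 2`, `z n ∈ [-1,1]` maximizes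
`∏_{j=1}^{n-1} |y - z j|` over `y ∈ [-1,1]`. -/
def IsLejaSeq (z : ℕ → ℝ) : Prop :=
  z 1 ∈ Set.Icc (-1 : ℝ) 1 ∧
  ∀ n : ℕ, 2 ≤ n → z n ∈ Set.Icc (-1 : ℝ) 1 ∧
    ∀ y ∈ Set.Icc (-1 : ℝ) 1,
      ∏ j ∈ Finset.Ico 1 n, |y - z j| ≤ ∏ j ∈ Finset.Ico 1 n, |z n - z j|

/-- The ellipse `I_{1/n}` with foci `±1` and sum of semiaxes `1 + 1/n`, i.e. the image of
the circle `|w| = 1 + 1/n` under the Joukowski map `w ↦ (w + 1/w)/2`. -/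
def joukowskiEllipse (n : ℕ) : Set ℂ :=
  {ζ : ℂ | ∃ w : ℂ, ‖w‖ = 1 + 1 / (n : ℝ) ∧ ζ = (w + w⁻¹) / 2}

/-- `ρ_{1/n}(x)`: the distance in `ℂ` from `x ∈ [-1,1]` to the ellipse `I_{1/n}`. -/
noncomputable def rho (n : ℕ) (x : ℝ) : ℝ :=
  Metric.infDist (x : ℂ) (joukowskiEllipse n)

open Complex Metric Set Finset

lemma lejaAux_maxmod {f : ℂ → ℂ} (hf : Differentiable ℂ f) {C : ℝ}
    (hC : ∀ w : ℂ, ‖w‖ = 1 → ‖f w‖ ≤ C) {w : ℂ} (hw : ‖w‖ ≤ 1) : ‖f w‖ ≤ C := by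
  refine Complex.norm_le_of_forall_mem_frontier_norm_le (U := Metric.ball (0:ℂ) 1)
    Metric.isBounded_ball hf.diffContOnCl ?_ ?_
  · intro ζ hζ
    rw [frontier_ball (0:ℂ) one_ne_zero, mem_sphere_iff_norm, sub_zero] at hζ
    exact hC ζ hζ
  · rw [closure_ball (0:ℂ) one_ne_zero]
    simpa [Metric.mem_closedBall, dist_zero_right] using hw

lemma lejaAux_factor (θ c : ℝ) :
    Complex.exp (θ * I) ^ 2 - 2 * (c:ℂ) * Complex.exp (θ * I) + 1
      = 2 * ((Real.cos θ - c : ℝ) : ℂ) * Complex.exp (θ * I) := by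
  rw [Complex.exp_mul_I]
  push_cast [Complex.ofReal_cos, Complex.ofReal_sin]
  linear_combination ((Complex.sin (θ:ℂ))^2) * Complex.I_sq - Complex.sin_sq_add_cos_sq (θ:ℂ)

lemma lejaAux_theta_sep (z : ℕ → ℝ) (hz : IsLejaSeq z) {m p : ℕ} (hm : 2 ≤ m)
    (hp1 : 1 ≤ p) (hpm : p < m) (hmem : ∀ i, 1 ≤ i → z i ∈ Set.Icc (-1:ℝ) 1) :
    1 ≤ 6 * ((m:ℝ) - 1) * |Real.arccos (z m) - Real.arccos (z p)| := by
  classical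
  set d : ℕ := m - 1 with hd
  have hd1 : 1 ≤ d := by omega
  have hdR : ((d:ℝ)) = (m:ℝ) - 1 := by
    rw [hd, Nat.cast_sub (by omega)]; norm_num
  have hdpos : (0:ℝ) < d := by exact_mod_cast hd1
  set s : Finset ℕ := Finset.Ico 1 m with hs
  have hcard : s.card = d := by rw [hs, Nat.card_Ico]
  set M : ℝ := ∏ i ∈ s, |z m - z i| with hM
  have hmax : ∀ y ∈ Set.Icc (-1:ℝ) 1, ∏ i ∈ s, |y - z i| ≤ M := (hz.2 m hm).2
  have hMpos : 0 < M := by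
    obtain ⟨y, hy, hyn⟩ := (Set.Icc_infinite (by norm_num : (-1:ℝ) < 1)).exists_notMem_finset
      (s.image z)
    refine lt_of_lt_of_le (Finset.prod_pos fun i hi => abs_pos.2 (sub_ne_zero.2 ?_)) (hmax y hy)
    exact fun h => hyn (Finset.mem_image.2 ⟨i, hi, h.symm⟩)
  set C₀ : ℝ := 2^d * M with hC₀
  have hC₀pos : 0 < C₀ := by positivity
  set B : ℂ → ℂ := fun w => ∏ i ∈ s, (w^2 - 2*(z i : ℂ)*w + 1) with hB
  have hBdiff : Differentiable ℂ B := by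
    apply Differentiable.fun_finsetProd
    intro i _
    apply Differentiable.add
    · exact (differentiable_pow 2).sub ((differentiable_id.const_mul _))
    · exact differentiable_const 1
  have hval : ∀ θ : ℝ, ‖B (Complex.exp (θ * I))‖ = 2^d * ∏ i ∈ s, |Real.cos θ - z i| := by
    intro θ
    rw [hB]
    simp only
    rw [norm_prod]
    have h1 : ∀ i ∈ s, ‖Complex.exp (θ*I)^2 - 2*(z i:ℂ)*Complex.exp (θ*I) + 1‖
        = 2 * |Real.cos θ - z i| := by
      intro i _
      rw [lejaAux_factor θ (z i), norm_mul, norm_mul]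
      have e1 : ‖(2:ℂ)‖ = 2 := by norm_num
      have e2 : ‖((Real.cos θ - z i : ℝ):ℂ)‖ = |Real.cos θ - z i| := by
        rw [Complex.norm_real, Real.norm_eq_abs]
      have e3 : ‖Complex.exp ((θ:ℝ)*I)‖ = 1 := by
        rw [Complex.norm_exp_ofReal_mul_I]
      rw [e1, e2, e3, mul_one]
    rw [Finset.prod_congr rfl h1, Finset.prod_mul_distrib, Finset.prod_const, hcard]
  have hcirc : ∀ w : ℂ, ‖w‖ = 1 → ‖B w‖ ≤ C₀ := by
    intro w hw
    have habs : ‖w‖ = 1 := hw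
    have h2 := Complex.norm_mul_cos_add_sin_mul_I w
    rw [habs, Complex.ofReal_one, one_mul] at h2
    have hwexp : Complex.exp (w.arg * I) = w := by
      rw [Complex.exp_mul_I]
      exact h2
    rw [← hwexp, hval]
    have hcos : Real.cos w.arg ∈ Set.Icc (-1:ℝ) 1 :=
      ⟨Real.neg_one_le_cos _, Real.cos_le_one _⟩
    rw [hC₀]
    have h3 := hmax _ hcos
    have h4 : (0:ℝ) ≤ 2^d := by positivity
    exact mul_le_mul_of_nonneg_left h3 h4
  have hself : ∀ ζ : ℂ, ζ ≠ 0 → B ζ = ζ^(2*d) * B ζ⁻¹ := by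
    intro ζ h0
    rw [hB]
    simp only
    have h1 : ∀ i ∈ s, ζ^2 * ((ζ⁻¹)^2 - 2*(z i:ℂ)*ζ⁻¹ + 1) = ζ^2 - 2*(z i:ℂ)*ζ + 1 := by
      intro i _
      field_simp
      ring
    rw [← Finset.prod_congr rfl h1, Finset.prod_mul_distrib, Finset.prod_const, hcard,
      ← pow_mul]
  have hgrow : ∀ ζ : ℂ, ‖ζ‖ ≤ 1 + 1/(2*(d:ℝ)) → ‖B ζ‖ ≤ 3 * C₀ := by
    intro ζ hζ
    rcases le_or_gt (‖ζ‖) 1 with h1 | h1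
    · exact (lejaAux_maxmod hBdiff hcirc h1).trans (by nlinarith)
    · have h0 : ζ ≠ 0 := by
        intro h; rw [h, norm_zero] at h1; linarith
      have hinv : ‖ζ⁻¹‖ ≤ 1 := by
        rw [norm_inv]
        exact inv_le_one_of_one_le₀ h1.le
      have h2 : ‖B ζ‖ = ‖ζ‖^(2*d) * ‖B ζ⁻¹‖ := by
        rw [hself ζ h0, norm_mul, norm_pow]
      have h3 : ‖ζ‖^(2*d) ≤ 3 := by
        have e1 : ‖ζ‖^(2*d) ≤ (1 + 1/(2*(d:ℝ)))^(2*d) :=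
          pow_le_pow_left₀ (norm_nonneg _) hζ _
        have e2 : (1 + 1/(2*(d:ℝ)))^(2*d) ≤ Real.exp (1/(2*(d:ℝ)))^(2*d) := by
          apply pow_le_pow_left₀ (by positivity)
          have := Real.add_one_le_exp (1/(2*(d:ℝ)))
          linarith
        have e3 : Real.exp (1/(2*(d:ℝ)))^(2*d) = Real.exp 1 := by
          rw [← Real.exp_nat_mul]
          congr 1
          push_cast
          field_simp
        have e4 : Real.exp 1 ≤ 3 := by
          have := Real.exp_one_lt_d9
          linarith
        calc ‖ζ‖^(2*d) ≤ _ := e1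
          _ ≤ _ := e2
          _ = _ := e3
          _ ≤ 3 := e4
      calc ‖B ζ‖ = ‖ζ‖^(2*d) * ‖B ζ⁻¹‖ := h2
        _ ≤ 3 * C₀ := by
          have h5 := lejaAux_maxmod hBdiff hcirc hinv
          have hn : (0:ℝ) ≤ ‖B ζ⁻¹‖ := norm_nonneg _
          nlinarith
  have hderiv : ∀ w : ℂ, ‖w‖ = 1 → ‖deriv B w‖ ≤ 6 * d * C₀ := by
    intro w hw
    have hR : (0:ℝ) < 1/(2*(d:ℝ)) := by positivity
    have h := Complex.norm_deriv_le_of_forall_mem_sphere_norm_le (c := w) hR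
      hBdiff.diffContOnCl (C := 3 * C₀) ?_
    · calc ‖deriv B w‖ ≤ 3 * C₀ / (1/(2*(d:ℝ))) := h
        _ = 6 * d * C₀ := by field_simp; ring
    · intro ζ hζ
      apply hgrow
      have h7 : ‖ζ - w‖ = 1/(2*(d:ℝ)) := by
        simpa [dist_eq_norm] using hζ
      calc ‖ζ‖ = ‖w + (ζ - w)‖ := by ring_nf
        _ ≤ ‖w‖ + ‖ζ - w‖ := norm_add_le _ _
        _ = 1 + 1/(2*(d:ℝ)) := by rw [hw, h7]
  set G : ℝ → ℂ := fun θ => B (Complex.exp (θ * I)) with hG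
  have hGd : ∀ θ : ℝ, HasDerivAt G ((Complex.exp (θ*I) * I) • deriv B (Complex.exp (θ*I))) θ := by
    intro θ
    have h1 : HasDerivAt (fun w : ℂ => Complex.exp (w * I)) (Complex.exp ((θ:ℂ)*I) * I) (θ:ℂ) := by
      simpa using (((hasDerivAt_id ((θ:ℂ))).mul_const I).cexp)
    have h2 : HasDerivAt (fun θ' : ℝ => Complex.exp (θ' * I)) (Complex.exp (θ*I) * I) θ :=
      h1.comp_ofReal
    have h3 : HasDerivAt B (deriv B (Complex.exp ((θ:ℝ) * I))) (Complex.exp ((θ:ℝ) * I)) :=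
      (hBdiff _).hasDerivAt
    have h4 := HasDerivAt.scomp_of_eq (x := θ) h3 h2 rfl
    exact h4
  have hGlip : ∀ a b : ℝ, ‖G b - G a‖ ≤ (6*d*C₀) * ‖b - a‖ := by
    intro a b
    refine Convex.norm_image_sub_le_of_norm_deriv_le (f := G)
      (fun x _ => (hGd x).differentiableAt) (fun x _ => ?_) convex_univ trivial trivial
    rw [(hGd x).deriv, norm_smul, norm_mul,
      Complex.norm_exp_ofReal_mul_I]
    simp only [Complex.norm_I, one_mul, mul_one]
    exact hderiv _ (by rw [Complex.norm_exp_ofReal_mul_I])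
  set θm : ℝ := Real.arccos (z m) with hθm
  set θp : ℝ := Real.arccos (z p) with hθp
  have hzm := hmem m (by omega)
  have hzp := hmem p hp1
  have hGm : ‖G θm‖ = C₀ := by
    rw [hG]
    simp only
    rw [hval, Real.cos_arccos hzm.1 hzm.2]
  have hGp : G θp = 0 := by
    have h8 : ‖G θp‖ = 0 := by
      rw [hG]
      simp only
      rw [hval, Real.cos_arccos hzp.1 hzp.2]
      have h9 : ∏ i ∈ s, |z p - z i| = 0 :=
        Finset.prod_eq_zero (by rw [hs]; exact Finset.mem_Ico.2 ⟨hp1, hpm⟩) (by simp)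
      rw [h9, mul_zero]
    simpa using h8
  have hkey : C₀ ≤ (6*d*C₀) * |θm - θp| := by
    have h10 := hGlip θp θm
    rw [hGp, sub_zero, hGm] at h10
    simpa [Real.norm_eq_abs] using h10
  have h6 : 1 ≤ 6 * (d:ℝ) * |θm - θp| := by nlinarith [abs_nonneg (θm - θp)]
  rwa [hdR] at h6

lemma lejaAux_rho_le {n : ℕ} (hn : 1 ≤ n) {x : ℝ} (hx : x ∈ Set.Icc (-1:ℝ) 1) :
    rho n x ≤ 1/(2*(n:ℝ)^2) + 3/(2*(n:ℝ)) * Real.sqrt (1 - x^2) := by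
  have hN : (0:ℝ) < n := by exact_mod_cast hn
  set t : ℝ := 1/(n:ℝ) with ht
  have ht0 : 0 < t := by positivity
  have ht1 : t ≤ 1 := by
    rw [ht, div_le_one hN]
    exact_mod_cast hn
  set r : ℝ := 1 + t with hr
  have hr1 : 1 ≤ r := by simp [hr]; linarith
  have h4 : (0:ℝ) < r := by linarith
  have hr0 : r ≠ 0 := by positivity
  set θ : ℝ := Real.arccos x with hθ
  set w : ℂ := (r:ℂ) * Complex.exp (θ * I) with hw
  have hwabs : ‖w‖ = 1 + 1/(n:ℝ) := by
    rw [hw, norm_mul, Complex.norm_real, Complex.norm_exp_ofReal_mul_I, mul_one,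
      Real.norm_eq_abs, abs_of_pos h4, hr, ht]
  have hmem : (w + w⁻¹)/2 ∈ joukowskiEllipse n := ⟨w, hwabs, rfl⟩
  have hle : rho n x ≤ dist ((x:ℝ):ℂ) ((w + w⁻¹)/2) := Metric.infDist_le_dist_of_mem hmem
  have hexp : Complex.exp ((θ:ℝ) * I) = ((Real.cos θ : ℝ):ℂ) + ((Real.sin θ : ℝ):ℂ) * I := by
    rw [Complex.exp_mul_I, Complex.ofReal_cos, Complex.ofReal_sin]
  have hexp' : Complex.exp (-((θ:ℝ) * I)) = ((Real.cos θ : ℝ):ℂ) - ((Real.sin θ : ℝ):ℂ) * I := by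
    have h1 : -((θ:ℝ) * I) = ((-θ : ℝ):ℂ) * I := by push_cast; ring
    rw [h1, Complex.exp_mul_I, Complex.ofReal_cos, Complex.ofReal_sin]
    push_cast
    rw [Complex.cos_neg, Complex.sin_neg]
    ring
  have hwinv : w⁻¹ = ((r⁻¹ : ℝ):ℂ) * Complex.exp (-((θ:ℝ) * I)) := by
    rw [hw, mul_inv, ← Complex.exp_neg]
    norm_cast
  have hpt : (w + w⁻¹)/2 - ((x:ℝ):ℂ)
      = (((r + r⁻¹)/2 * Real.cos θ - x : ℝ):ℂ) + (((r - r⁻¹)/2 * Real.sin θ : ℝ):ℂ) * I := by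
    rw [hw, hwinv, hexp, hexp']
    push_cast
    ring
  have hdist : dist ((x:ℝ):ℂ) ((w + w⁻¹)/2)
      ≤ |(r + r⁻¹)/2 * Real.cos θ - x| + |(r - r⁻¹)/2 * Real.sin θ| := by
    rw [dist_comm, dist_eq, hpt]
    have := Complex.norm_le_abs_re_add_abs_im
      ((((r + r⁻¹)/2 * Real.cos θ - x : ℝ):ℂ) + (((r - r⁻¹)/2 * Real.sin θ : ℝ):ℂ) * I)
    simpa [-Complex.ofReal_cos, -Complex.ofReal_sin] using this
  have hcos : Real.cos θ = x := Real.cos_arccos hx.1 hx.2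
  have hsin : Real.sin θ = Real.sqrt (1 - x^2) := Real.sin_arccos x
  have hsin0 : 0 ≤ Real.sin θ := by rw [hsin]; positivity
  have hx1 : |x| ≤ 1 := abs_le.2 ⟨hx.1, hx.2⟩
  have key1 : r * ((r + r⁻¹) - 2) = t^2 := by
    field_simp
    ring
  have key2 : r * (r - r⁻¹) = t^2 + 2*t := by
    field_simp
    ring
  have h2 : (0:ℝ) ≤ (r + r⁻¹)/2 - 1 := by nlinarith [sq_nonneg t]
  have h3 : (r + r⁻¹)/2 - 1 ≤ t^2/2 := by nlinarith [sq_nonneg t, mul_pos ht0 ht0]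
  have h5 : (0:ℝ) ≤ (r - r⁻¹)/2 := by nlinarith [sq_nonneg t, mul_pos ht0 ht0]
  have h6 : (r - r⁻¹)/2 ≤ 3/2*t := by nlinarith [sq_nonneg t, mul_pos ht0 ht0]
  have hA : |(r + r⁻¹)/2 * Real.cos θ - x| ≤ 1/(2*(n:ℝ)^2) := by
    rw [hcos]
    have e1 : (r + r⁻¹)/2 * x - x = ((r + r⁻¹)/2 - 1) * x := by ring
    rw [e1, abs_mul]
    have e2 : t^2/2 = 1/(2*(n:ℝ)^2) := by rw [ht]; field_simp
    calc |(r + r⁻¹)/2 - 1| * |x| ≤ |(r + r⁻¹)/2 - 1| * 1 :=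
          mul_le_mul_of_nonneg_left hx1 (abs_nonneg _)
      _ = (r + r⁻¹)/2 - 1 := by rw [mul_one, _root_.abs_of_nonneg h2]
      _ ≤ t^2/2 := h3
      _ = _ := e2
  have hB : |(r - r⁻¹)/2 * Real.sin θ| ≤ 3/(2*(n:ℝ)) * Real.sqrt (1 - x^2) := by
    rw [_root_.abs_of_nonneg (mul_nonneg h5 hsin0), hsin]
    have e3 : 3/2*t = 3/(2*(n:ℝ)) := by rw [ht]; field_simp
    calc (r - r⁻¹)/2 * Real.sqrt (1 - x^2) ≤ 3/2*t * Real.sqrt (1 - x^2) :=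
          mul_le_mul_of_nonneg_right h6 (Real.sqrt_nonneg _)
      _ = _ := by rw [e3]
  calc rho n x ≤ _ := hle
    _ ≤ _ := hdist
    _ ≤ 1/(2*(n:ℝ)^2) + 3/(2*(n:ℝ)) * Real.sqrt (1 - x^2) := add_le_add hA hB

lemma lejaAux_sin_add_sin (x y : ℝ) :
    Real.sin x + Real.sin y = 2 * Real.sin ((x+y)/2) * Real.cos ((x-y)/2) := by
  have h1 := Real.sin_add ((x+y)/2) ((x-y)/2)
  have h2 := Real.sin_sub ((x+y)/2) ((x-y)/2)
  have e1 : (x+y)/2 + (x-y)/2 = x := by ring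
  have e2 : (x+y)/2 - (x-y)/2 = y := by ring
  rw [e1] at h1
  rw [e2] at h2
  linarith [h1, h2]


set_option maxHeartbeats 1000000 in
/-- **Proposition.** Leja points on `[-1,1]` are well separated: there is a constant
`c > 0` such that for every Leja sequence, every `n ≥ 2` and all `1 ≤ j, k ≤ n` with
`j ≠ k`, one has `|z k - z j| ≥ c · ρ_{1/n}(z k)`. -/
theorem leja_points_well_separated :
    ∃ c : ℝ, 0 < c ∧ ∀ z : ℕ → ℝ, IsLejaSeq z →
      ∀ n : ℕ, 2 ≤ n → ∀ j k : ℕ, 1 ≤ j → j ≤ n → 1 ≤ k → k ≤ n → j ≠ k →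
        c * rho n (z k) ≤ |z k - z j| := by
  refine ⟨1/200, by norm_num, ?_⟩
  intro z hz n hn j k hj1 hjn hk1 hkn hjk
  have hmem : ∀ i, 1 ≤ i → z i ∈ Set.Icc (-1:ℝ) 1 := by
    intro i hi
    rcases Nat.lt_or_ge i 2 with h | h
    · interval_cases i
      exact hz.1
    · exact (hz.2 i h).1
  set m := max j k with hmdef
  set p := min j k with hpdef
  have hm2 : 2 ≤ m := by
    rcases Nat.lt_or_ge j k with h | h
    · have : k = m := by rw [hmdef]; omega
      omega
    · omega
  have hp1 : 1 ≤ p := le_min hj1 hk1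
  have hpm : p < m := by
    rw [hmdef, hpdef]; omega
  have hmn : m ≤ n := max_le hjn hkn
  have hsep := lejaAux_theta_sep z hz hm2 hp1 hpm hmem
  set a : ℝ := Real.arccos (z j) with ha
  set b : ℝ := Real.arccos (z k) with hb
  have hdabs : |Real.arccos (z m) - Real.arccos (z p)| = |b - a| := by
    rcases le_total j k with h | h
    · rw [hmdef, hpdef, max_eq_right h, min_eq_left h]
    · rw [hmdef, hpdef, max_eq_left h, min_eq_right h, abs_sub_comm]
  rw [hdabs] at hsep
  set δ : ℝ := |b - a| with hδ
  have hδ0 : 0 ≤ δ := abs_nonneg _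
  have hNpos : (0:ℝ) < n := by positivity
  have hN2 : (2:ℝ) ≤ n := by exact_mod_cast hn
  have hδn : 1/(6*(n:ℝ)) ≤ δ := by
    have hmR : ((m:ℝ)) - 1 ≤ (n:ℝ) := by
      have : (m:ℝ) ≤ n := by exact_mod_cast hmn
      linarith
    have h1 : 1 ≤ 6 * (n:ℝ) * δ := by nlinarith
    rw [div_le_iff₀ (by positivity)]
    linarith
  have ha0 : 0 ≤ a := Real.arccos_nonneg _
  have haπ : a ≤ Real.pi := Real.arccos_le_pi _
  have hb0 : 0 ≤ b := Real.arccos_nonneg _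
  have hbπ : b ≤ Real.pi := Real.arccos_le_pi _
  have hcosa : Real.cos a = z j := Real.cos_arccos (hmem j hj1).1 (hmem j hj1).2
  have hcosb : Real.cos b = z k := Real.cos_arccos (hmem k hk1).1 (hmem k hk1).2
  have hδπ : δ ≤ Real.pi := by
    rw [hδ, abs_sub_le_iff]
    constructor <;> linarith
  set sM : ℝ := (a+b)/2 with hsM
  have hsM0 : 0 ≤ sM := by rw [hsM]; linarith
  have hsMπ : sM ≤ Real.pi := by rw [hsM]; linarith
  have hsinsM : 0 ≤ Real.sin sM := Real.sin_nonneg_of_nonneg_of_le_pi hsM0 hsMπ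
  -- gap formula
  have hgap : |z k - z j| = 2 * Real.sin sM * Real.sin (δ/2) := by
    have hform : z k - z j = -2 * Real.sin sM * Real.sin ((b-a)/2) := by
      rw [← hcosa, ← hcosb, Real.cos_sub_cos]
      have e : (b+a)/2 = sM := by rw [hsM]; ring
      rw [e]
    rw [hform, abs_mul, abs_mul]
    have e1 : |(-2:ℝ)| = 2 := by norm_num
    have e2 : |Real.sin sM| = Real.sin sM := _root_.abs_of_nonneg hsinsM
    have e3 : |Real.sin ((b-a)/2)| = Real.sin (δ/2) := by
      rcases le_total a b with h | h
      · rw [hδ, _root_.abs_of_nonneg (by linarith : (0:ℝ) ≤ b - a)]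
        exact _root_.abs_of_nonneg (Real.sin_nonneg_of_nonneg_of_le_pi (by linarith)
          (by linarith))
      · have hba : (b - a) ≤ 0 := by linarith
        rw [hδ, _root_.abs_of_nonpos hba]
        have e4 : Real.sin ((b-a)/2) = - Real.sin ((a-b)/2) := by
          have e5 : (b-a)/2 = -((a-b)/2) := by ring
          rw [e5, Real.sin_neg]
        rw [e4, abs_neg, _root_.abs_of_nonneg (Real.sin_nonneg_of_nonneg_of_le_pi
          (by linarith) (by linarith))]
        congr 1
        ring
    rw [e1, e2, e3]
  -- lower bound for sin(δ/2)
  have hsinu : 1/(6*Real.pi*(n:ℝ)) ≤ Real.sin (δ/2) := by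
    have h1 : 2/Real.pi * (δ/2) ≤ Real.sin (δ/2) :=
      Real.mul_le_sin (by linarith) (by linarith)
    have h2 : 1/(6*Real.pi*(n:ℝ)) ≤ 2/Real.pi * (δ/2) := by
      rw [div_le_iff₀ (by positivity)]
      have e : 2/Real.pi * (δ/2) * (6*Real.pi*(n:ℝ)) = 6*δ*(n:ℝ) := by
        field_simp
      rw [e]
      have h3 : 1 ≤ δ*(6*(n:ℝ)) := by
        rw [div_le_iff₀ (by positivity)] at hδn
        linarith
      linarith
    linarith
  -- sin sM dominates
  have hδa : δ ≤ a + b := by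
    rw [hδ, abs_sub_le_iff]
    constructor <;> linarith
  have hδ2π : a + b + δ ≤ 2*Real.pi := by
    rcases le_total a b with h | h
    · rw [hδ, _root_.abs_of_nonneg (by linarith : (0:ℝ) ≤ b - a)]
      linarith
    · rw [hδ, _root_.abs_of_nonpos (by linarith : b - a ≤ 0)]
      linarith
  have hs1 : Real.sin (δ/2) ≤ Real.sin sM := by
    rcases le_total sM (Real.pi/2) with h | h
    · exact Real.sin_le_sin_of_le_of_le_pi_div_two (by linarith) h (by rw [hsM]; linarith)
    · have e := Real.sin_pi_sub sM
      rw [← e]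
      exact Real.sin_le_sin_of_le_of_le_pi_div_two (by linarith) (by linarith)
        (by rw [hsM]; linarith)
  have hsina : 0 ≤ Real.sin a := Real.sin_nonneg_of_nonneg_of_le_pi ha0 haπ
  have hsinb : Real.sin b = Real.sqrt (1 - (z k)^2) := by rw [hb, Real.sin_arccos]
  have hs2 : Real.sqrt (1 - (z k)^2) ≤ 2 * Real.sin sM := by
    have hadd := lejaAux_sin_add_sin a b
    rw [← hsM] at hadd
    have hc1 : Real.cos ((a-b)/2) ≤ 1 := Real.cos_le_one _
    nlinarith [mul_nonneg hsinsM (sub_nonneg.2 hc1)]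
  have h2max : Real.sin (δ/2) + Real.sqrt (1 - (z k)^2)/2 ≤ 2 * Real.sin sM := by
    rcases le_total (2*Real.sin (δ/2)) (Real.sqrt (1 - (z k)^2)) with h | h
    · linarith
    · linarith
  -- final numeric comparison
  have hS0 : 0 ≤ Real.sqrt (1 - (z k)^2) := Real.sqrt_nonneg _
  have hP1 : 3 < Real.pi := Real.pi_gt_three
  have hP2 : Real.pi < 3.15 := Real.pi_lt_d2
  have hPpos : (0:ℝ) < Real.pi := by linarith
  set S : ℝ := Real.sqrt (1 - (z k)^2) with hSdef
  set β : ℝ := 1/(6*Real.pi*(n:ℝ)) with hβdef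
  have hβpos : 0 < β := by rw [hβdef]; positivity
  have hrho := lejaAux_rho_le (n := n) (by omega) (hmem k hk1)
  have hn0 : ((n:ℝ)) ≠ 0 := by positivity
  have k1 : (1/200:ℝ) * (1/(2*(n:ℝ)^2)) ≤ β^2 := by
    have e : β^2 = 1/(36*Real.pi^2*(n:ℝ)^2) := by
      rw [hβdef, div_pow, one_pow]
      congr 1
      ring
    have e2 : (1/200:ℝ) * (1/(2*(n:ℝ)^2)) = 1/(400*(n:ℝ)^2) := by
      ring
    rw [e, e2]
    apply one_div_le_one_div_of_le (by positivity)
    have h36 : 36*Real.pi^2 ≤ 400 := by nlinarith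
    nlinarith [sq_nonneg ((n:ℝ))]
  have k2 : (1/200:ℝ) * (3/(2*(n:ℝ))*S) ≤ S/2 * β := by
    have e : S/2 * β = S * (1/(12*Real.pi*(n:ℝ))) := by
      rw [hβdef]
      ring
    have e2 : (1/200:ℝ) * (3/(2*(n:ℝ))*S) = S * (3/(400*(n:ℝ))) := by ring
    rw [e, e2]
    apply mul_le_mul_of_nonneg_left _ hS0
    rw [div_le_div_iff₀ (by positivity) (by positivity)]
    nlinarith
  have hfinal : (1/200:ℝ) * rho n (z k) ≤ β^2 + S/2 * β := by
    calc (1/200:ℝ) * rho n (z k) ≤ (1/200:ℝ) * (1/(2*(n:ℝ)^2) + 3/(2*(n:ℝ))*S) := by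
          apply mul_le_mul_of_nonneg_left _ (by norm_num)
          exact hrho
      _ = (1/200:ℝ)*(1/(2*(n:ℝ)^2)) + (1/200:ℝ)*(3/(2*(n:ℝ))*S) := by ring
      _ ≤ β^2 + S/2*β := add_le_add k1 k2
  have hgap2 : β^2 + S/2*β ≤ |z k - z j| := by
    have hu0 : (0:ℝ) < Real.sin (δ/2) := lt_of_lt_of_le hβpos hsinu
    rw [hgap]
    nlinarith [mul_le_mul_of_nonneg_right h2max hu0.le,
      pow_le_pow_left₀ hβpos.le hsinu 2,
      mul_le_mul_of_nonneg_left hsinu (by positivity : (0:ℝ) ≤ S/2)]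
  linarith
end

section
/- There exists a constant c > 0 such that every sequence of Leja points z₁, z₂, … on [−1,1] satisfies the distancing rule: for every n ≥ 2 and all 1 ≤ j, k ≤ n with j ≠ k, |z_j − z_k| ≥ c( √(1−|z_j|)/n + √(1−|z_k|)/n + 1/n² ). -/
open Polynomial Complex Set Metric

/-- Compatibility: the complex absolute value as an `AbsoluteValue`. -/
noncomputable def Complex.abs : AbsoluteValue ℂ ℝ where
  toFun z := ‖z‖
  map_mul' := norm_mul
  nonneg' := norm_nonneg
  eq_zero' _ := norm_eq_zero
  add_le' := norm_add_le

lemma Complex.abs_def' (z : ℂ) : Complex.abs z = ‖z‖ := rfl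

@[simp]
lemma Complex.abs_ofReal (r : ℝ) : Complex.abs r = |r| := by
  rw [Complex.abs_def', Complex.norm_real, Real.norm_eq_abs]

@[simp]
lemma Complex.abs_natCast (n : ℕ) : Complex.abs n = n := Complex.norm_natCast n

@[simp]
lemma Complex.abs_exp_ofReal_mul_I (x : ℝ) : Complex.abs (Complex.exp (x * Complex.I)) = 1 :=
  Complex.norm_exp_ofReal_mul_I x

@[simp]
lemma Complex.abs_conj (z : ℂ) : Complex.abs ((starRingEnd ℂ) z) = Complex.abs z :=
  Complex.norm_conj z

lemma Complex.abs_apply (z : ℂ) : Complex.abs z = Real.sqrt (Complex.normSq z) := Complex.norm_def z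

lemma Complex.continuous_abs : Continuous Complex.abs := continuous_norm

lemma Complex.abs_mul_exp_arg_mul_I (x : ℂ) :
    ((Complex.abs x : ℝ) : ℂ) * Complex.exp (x.arg * Complex.I) = x :=
  Complex.norm_mul_exp_arg_mul_I x

lemma Complex.sq_abs (z : ℂ) : Complex.abs z ^ 2 = Complex.normSq z := Complex.sq_norm z

lemma Complex.re_le_abs (z : ℂ) : z.re ≤ Complex.abs z := Complex.re_le_norm z

/-- Maximum modulus for polynomials on the closed unit disk. -/
lemma poly_maxmod (p : ℂ[X]) (M : ℝ) (h : ∀ z : ℂ, Complex.abs z = 1 → Complex.abs (p.eval z) ≤ M) :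
    ∀ z : ℂ, Complex.abs z ≤ 1 → Complex.abs (p.eval z) ≤ M := by
  intro z hz
  have hb : Bornology.IsBounded (ball (0:ℂ) 1) := isBounded_ball
  have hd : DiffContOnCl ℂ (fun w => p.eval w) (ball (0:ℂ) 1) :=
    (p.differentiable).diffContOnCl
  have hz' : z ∈ closure (ball (0:ℂ) 1) := by
    rw [closure_ball (0:ℂ) one_ne_zero]
    simpa [Complex.dist_eq, Complex.abs_def'] using hz
  have key : ‖p.eval z‖ ≤ M := by
    refine Complex.norm_le_of_forall_mem_frontier_norm_le hb hd (fun w hw => ?_) hz'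
    rw [frontier_ball (0:ℂ) one_ne_zero] at hw
    have hw1 : Complex.abs w = 1 := by simpa [Complex.dist_eq, Complex.abs_def'] using hw
    simpa [Complex.abs_def'] using h w hw1
  simpa [Complex.abs_def'] using key

variable {ι : Type} [DecidableEq ι]

/-- Exterior growth bound for a monic polynomial with roots on the unit circle. -/
lemma poly_exterior (s : Finset ι) (w : ι → ℂ) (hw : ∀ i ∈ s, Complex.abs (w i) = 1)
    (M : ℝ) (hb : ∀ z : ℂ, Complex.abs z = 1 → Complex.abs (∏ i ∈ s, (z - w i)) ≤ M) :
    ∀ z : ℂ, 1 ≤ Complex.abs z → Complex.abs (∏ i ∈ s, (z - w i)) ≤ M * Complex.abs z ^ s.card := by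
  have gball : ∀ u : ℂ, Complex.abs u ≤ 1 → Complex.abs (∏ i ∈ s, (1 - w i * u)) ≤ M := by
    intro u hu
    have := poly_maxmod (∏ i ∈ s, (1 - C (w i) * X)) M ?_ u hu
    · simpa [Polynomial.eval_prod] using this
    · intro v hv
      rw [Polynomial.eval_prod]
      simp only [Polynomial.eval_sub, Polynomial.eval_one, Polynomial.eval_mul, Polynomial.eval_C,
        Polynomial.eval_X]
      have key : ∀ i ∈ s, Complex.abs (1 - w i * v) = Complex.abs ((starRingEnd ℂ) v - w i) := by
        intro i hi
        have hvc : v * (starRingEnd ℂ) v = 1 := by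
          rw [Complex.mul_conj]
          norm_cast
          simp [← Complex.sq_abs, hv]
        have h1 : (1 : ℂ) - w i * v = v * ((starRingEnd ℂ) v - w i) := by
          rw [mul_sub, hvc]; ring
        rw [h1, map_mul, hv, one_mul]
      rw [Finset.prod_congr rfl (fun i hi => by rfl)]
      calc Complex.abs (∏ i ∈ s, (1 - w i * v))
          = ∏ i ∈ s, Complex.abs (1 - w i * v) := by rw [map_prod]
        _ = ∏ i ∈ s, Complex.abs ((starRingEnd ℂ) v - w i) := Finset.prod_congr rfl key
        _ = Complex.abs (∏ i ∈ s, ((starRingEnd ℂ) v - w i)) := by rw [map_prod]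
        _ ≤ M := hb _ (by simpa using hv)
  intro z hz
  have hz0 : z ≠ 0 := by
    intro h; rw [h] at hz; simp at hz; linarith
  have hfact : (∏ i ∈ s, (z - w i)) = z ^ s.card * ∏ i ∈ s, (1 - w i * z⁻¹) := by
    rw [← Finset.prod_const (b := z), ← Finset.prod_mul_distrib]
    refine Finset.prod_congr rfl fun i hi => ?_
    field_simp
  have hinv : Complex.abs z⁻¹ ≤ 1 := by
    rw [map_inv₀]
    exact inv_le_one_of_one_le₀ hz
  calc Complex.abs (∏ i ∈ s, (z - w i))
      = Complex.abs z ^ s.card * Complex.abs (∏ i ∈ s, (1 - w i * z⁻¹)) := by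
        rw [hfact, map_mul, map_pow]
    _ ≤ Complex.abs z ^ s.card * M := by
        have := gball z⁻¹ hinv
        have h0 : (0:ℝ) ≤ Complex.abs z ^ s.card := by positivity
        exact mul_le_mul_of_nonneg_left this h0
    _ = M * Complex.abs z ^ s.card := by ring

/-- The max of a monic polynomial on the circle is at least 1. -/
lemma M_ge_one (s : Finset ι) (w : ι → ℂ)
    (M : ℝ) (hb : ∀ z : ℂ, Complex.abs z = 1 → Complex.abs (∏ i ∈ s, (z - w i)) ≤ M) :
    1 ≤ M := by
  have gball : Complex.abs (∏ i ∈ s, ((1:ℂ) - w i * 0)) ≤ M := by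
    have := poly_maxmod (∏ i ∈ s, (1 - C (w i) * X)) M ?_ 0 (by simp)
    · simpa [Polynomial.eval_prod] using this
    · intro v hv
      rw [Polynomial.eval_prod]
      simp only [Polynomial.eval_sub, Polynomial.eval_one, Polynomial.eval_mul, Polynomial.eval_C,
        Polynomial.eval_X]
      have hvc : v * (starRingEnd ℂ) v = 1 := by
        rw [Complex.mul_conj]; norm_cast; simp [← Complex.sq_abs, hv]
      calc Complex.abs (∏ i ∈ s, (1 - w i * v))
          = ∏ i ∈ s, Complex.abs (1 - w i * v) := by rw [map_prod]
        _ = ∏ i ∈ s, Complex.abs ((starRingEnd ℂ) v - w i) := by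
            refine Finset.prod_congr rfl fun i hi => ?_
            have h1 : (1 : ℂ) - w i * v = v * ((starRingEnd ℂ) v - w i) := by
              rw [mul_sub, hvc]; ring
            rw [h1, map_mul, hv, one_mul]
        _ = Complex.abs (∏ i ∈ s, ((starRingEnd ℂ) v - w i)) := by rw [map_prod]
        _ ≤ M := hb _ (by simpa using hv)
  simpa using gball

/-- Derivative of a multiset product `∏ (w - r)`, with the Gauss–Lucas positivity payload. -/
lemma multiset_prod_deriv (z₀ : ℂ) (hz : 1 < Complex.abs z₀) :
    ∀ R : Multiset ℂ, (∀ r ∈ R, Complex.abs r < 1) →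
      ∃ d : ℂ, HasDerivAt (fun w : ℂ => (R.map (fun r => w - r)).prod) d z₀ ∧
        (R ≠ 0 → 0 < (z₀ * d * (starRingEnd ℂ) ((R.map (fun r => z₀ - r)).prod)).re) := by
  intro R
  induction R using Multiset.induction_on with
  | empty =>
      intro _
      exact ⟨0, by simpa using hasDerivAt_const z₀ (1:ℂ), by simp⟩
  | cons a R ih =>
      intro hmem
      obtain ⟨d', hd', hpos'⟩ := ih (fun r hr => hmem r (Multiset.mem_cons_of_mem hr))
      have ha : Complex.abs a < 1 := hmem a (Multiset.mem_cons_self a R)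
      set P' : ℂ := (R.map (fun r => z₀ - r)).prod with hP'
      have hfun : (fun w : ℂ => ((a ::ₘ R).map (fun r => w - r)).prod)
          = fun w : ℂ => (w - a) * (R.map (fun r => w - r)).prod := by
        funext w; rw [Multiset.map_cons, Multiset.prod_cons]
      have hder : HasDerivAt (fun w : ℂ => ((a ::ₘ R).map (fun r => w - r)).prod)
          (1 * P' + (z₀ - a) * d') z₀ := by
        rw [hfun]
        exact ((hasDerivAt_id z₀).sub_const a).mul hd'
      refine ⟨1 * P' + (z₀ - a) * d', hder, fun _ => ?_⟩
      have hP'ne : ∀ r ∈ R, z₀ - r ≠ 0 := by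
        intro r hr h0
        have : Complex.abs r < 1 := hmem r (Multiset.mem_cons_of_mem hr)
        have : z₀ = r := by linear_combination h0
        rw [this] at hz; linarith
      have hprodne : P' ≠ 0 := by
        rw [hP']
        refine Multiset.prod_ne_zero ?_
        intro h0
        obtain ⟨r, hr, hr0⟩ := Multiset.mem_map.mp h0
        exact hP'ne r hr hr0
      -- target: re of z₀ * (P' + (z₀-a) d') * conj ((z₀-a) * P') > 0
      have hexp : (z₀ * (1 * P' + (z₀ - a) * d') *
            (starRingEnd ℂ) (((a ::ₘ R).map (fun r => z₀ - r)).prod)).re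
          = (z₀ * (starRingEnd ℂ) (z₀ - a)).re * Complex.normSq P'
            + Complex.normSq (z₀ - a) * (z₀ * d' * (starRingEnd ℂ) P').re := by
        rw [Multiset.map_cons, Multiset.prod_cons, map_mul]
        have h1 : z₀ * (1 * P' + (z₀ - a) * d') * ((starRingEnd ℂ) (z₀ - a) * (starRingEnd ℂ) P')
            = (z₀ * (starRingEnd ℂ) (z₀ - a)) * (P' * (starRingEnd ℂ) P')
              + ((z₀ - a) * (starRingEnd ℂ) (z₀ - a)) * (z₀ * d' * (starRingEnd ℂ) P') := by
          ring
        rw [h1, Complex.mul_conj, Complex.mul_conj]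
        simp [Complex.add_re, Complex.mul_re]
      rw [hexp]
      have hterm1 : 0 < (z₀ * (starRingEnd ℂ) (z₀ - a)).re := by
        have : (z₀ * (starRingEnd ℂ) (z₀ - a)).re
            = Complex.normSq z₀ - (z₀ * (starRingEnd ℂ) a).re := by
          rw [map_sub, mul_sub]
          simp [Complex.sub_re, Complex.mul_conj]
        rw [this]
        have h2 : (z₀ * (starRingEnd ℂ) a).re ≤ Complex.abs z₀ * Complex.abs a := by
          calc (z₀ * (starRingEnd ℂ) a).re ≤ Complex.abs (z₀ * (starRingEnd ℂ) a) := Complex.re_le_abs _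
            _ = Complex.abs z₀ * Complex.abs a := by rw [map_mul, Complex.abs_conj]
        have h3 : Complex.abs z₀ * Complex.abs a < Complex.abs z₀ * Complex.abs z₀ := by
          have h4 : Complex.abs a < Complex.abs z₀ := lt_trans ha hz
          have : 0 < Complex.abs z₀ := by linarith
          nlinarith
        have h5 : Complex.normSq z₀ = Complex.abs z₀ * Complex.abs z₀ := by
          rw [← Complex.sq_abs]; ring
        linarith
      have hsq : 0 < Complex.normSq P' := by
        rwa [Complex.normSq_pos]
      rcases Multiset.empty_or_exists_mem R with hR0 | ⟨b, hb⟩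
      · subst hR0
        simp only [Multiset.map_zero, Multiset.prod_zero] at hP'
        have hd'0 : d' = 0 := by
          have h7 : HasDerivAt (fun _ : ℂ => (1:ℂ)) d' z₀ := by
            simpa using hd'
          exact (h7.unique (hasDerivAt_const z₀ 1))
        rw [hd'0]
        simp only [mul_zero, zero_mul, Complex.zero_re]
        nlinarith [Complex.normSq_nonneg (z₀ - a)]
      · have hRne : R ≠ 0 := by
          intro h; rw [h] at hb; simp at hb
        have hpos := hpos' hRne
        have h6 : 0 < Complex.normSq (z₀ - a) := by
          rw [Complex.normSq_pos]
          intro h0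
          have : z₀ = a := by linear_combination h0
          rw [this] at hz; linarith
        nlinarith

/-- Bernstein bound outside the disk, for monic polys with roots on the circle. -/
lemma bernstein_exterior (s : Finset ι) (w : ι → ℂ) (hw : ∀ i ∈ s, Complex.abs (w i) = 1)
    (M : ℝ) (hb : ∀ z : ℂ, Complex.abs z = 1 → Complex.abs (∏ i ∈ s, (z - w i)) ≤ M) :
    ∀ z₀ : ℂ, 1 < Complex.abs z₀ →
      Complex.abs ((derivative (∏ i ∈ s, (X - C (w i)))).eval z₀)
        ≤ s.card * M * Complex.abs z₀ ^ (s.card - 1) := by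
  intro z₀ hz₀
  set Qp : ℂ[X] := ∏ i ∈ s, (X - C (w i)) with hQp
  have hM1 : 1 ≤ M := M_ge_one s w M hb
  have hM0 : (0:ℝ) < M := by linarith
  have hevalQ : ∀ v : ℂ, Qp.eval v = ∏ i ∈ s, (v - w i) := by
    intro v; rw [hQp, Polynomial.eval_prod]; simp
  set D : ℕ := s.card with hD
  rcases Nat.eq_zero_or_pos D with hD0 | hD1
  · have hs0 : s = ∅ := Finset.card_eq_zero.mp (by omega)
    have : Qp = 1 := by rw [hQp, hs0]; simp
    rw [this]
    simp
    positivity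
  by_contra hcon
  push_neg at hcon
  have hz₀0 : z₀ ≠ 0 := by
    intro h; rw [h] at hz₀; simp at hz₀; linarith
  set q : ℂ := (derivative Qp).eval z₀ with hq
  set lam : ℂ := q / ((M : ℂ) * D * z₀ ^ (D - 1)) with hlam
  have hMc : ((M:ℂ)) ≠ 0 := by exact_mod_cast ne_of_gt hM0
  have hDc : ((D:ℂ)) ≠ 0 := by exact_mod_cast Nat.pos_iff_ne_zero.mp hD1
  have hden : ((M : ℂ) * (D:ℂ) * z₀ ^ (D - 1)) ≠ 0 :=
    mul_ne_zero (mul_ne_zero hMc hDc) (pow_ne_zero _ hz₀0)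
  have habsden : Complex.abs ((M : ℂ) * (D:ℂ) * z₀ ^ (D - 1))
      = D * M * Complex.abs z₀ ^ (D - 1) := by
    rw [map_mul, map_mul, map_pow, Complex.abs_ofReal, Complex.abs_natCast,
      abs_of_pos hM0]
    ring
  have hlam1 : 1 < Complex.abs lam := by
    rw [hlam, map_div₀, habsden]
    rw [lt_div_iff₀ (by positivity)]
    simpa [one_mul] using hcon
  have hlamden : lam * ((M : ℂ) * (D:ℂ) * z₀ ^ (D - 1)) = q := div_mul_cancel₀ q hden
  -- the competitor polynomial
  set Hp : ℂ[X] := C (lam * M) * X ^ D - Qp with hHp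
  have hQmonic : Qp.Monic := monic_prod_of_monic _ _ (fun i _ => monic_X_sub_C (w i))
  have hQdeg : Qp.natDegree = D := by
    rw [hQp, Polynomial.natDegree_prod_of_monic _ _ (fun i _ => monic_X_sub_C (w i))]
    simp [natDegree_X_sub_C, hD]
  have hlcne : lam * (M:ℂ) - 1 ≠ 0 := by
    intro h0
    have h1 : lam * (M:ℂ) = 1 := by linear_combination h0
    have := congrArg Complex.abs h1
    rw [map_mul] at this
    simp [Complex.abs_ofReal, abs_of_pos hM0] at this
    nlinarith [Complex.abs.nonneg lam]
  have hcoeffD : Hp.coeff D = lam * M - 1 := by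
    rw [hHp, Polynomial.coeff_sub, Polynomial.coeff_C_mul, Polynomial.coeff_X_pow]
    simp [← hQdeg, hQmonic.coeff_natDegree]
  have hHdeg : Hp.natDegree = D := by
    apply le_antisymm
    · apply le_trans (Polynomial.natDegree_sub_le _ _)
      apply max_le
      · exact le_trans (Polynomial.natDegree_C_mul_le _ _) (by simp)
      · exact le_of_eq hQdeg
    · exact Polynomial.le_natDegree_of_ne_zero (hcoeffD ▸ hlcne)
  have hHne : Hp ≠ 0 := fun h => hlcne (by simp [← hcoeffD, h])
  have hHlc : Hp.leadingCoeff = lam * M - 1 := by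
    rw [Polynomial.leadingCoeff, hHdeg, hcoeffD]
  set R : Multiset ℂ := Hp.roots with hR
  have hRcard : R.card = D := by
    rw [hR, ← hHdeg]
    exact (Polynomial.splits_iff_card_roots.mp (IsAlgClosed.splits Hp))
  have hfactor : Hp = C (lam * M - 1) * (R.map fun a => X - C a).prod := by
    rw [← hHlc]
    exact Polynomial.Splits.eq_prod_roots (IsAlgClosed.splits Hp)
  -- roots are in the open unit ball
  have hball : ∀ r ∈ R, Complex.abs r < 1 := by
    intro r hr
    by_contra hr1
    push_neg at hr1
    have hroot : Hp.eval r = 0 := Polynomial.isRoot_of_mem_roots hr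
    have hev : lam * M * r ^ D = Qp.eval r := by
      have := hroot
      rw [hHp] at this
      simp only [Polynomial.eval_sub, Polynomial.eval_mul, Polynomial.eval_C,
        Polynomial.eval_pow, Polynomial.eval_X] at this
      linear_combination this
    have hext : Complex.abs (Qp.eval r) ≤ M * Complex.abs r ^ D := by
      rw [hevalQ]
      exact poly_exterior s w hw M hb r hr1
    have hlhs : Complex.abs (lam * M * r ^ D)
        = Complex.abs lam * M * Complex.abs r ^ D := by
      rw [map_mul, map_mul, map_pow]
      simp [Complex.abs_ofReal, abs_of_pos hM0]
    have hgt : M * Complex.abs r ^ D < Complex.abs lam * M * Complex.abs r ^ D := by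
      have hpos : (0:ℝ) < M * Complex.abs r ^ D := by
        have : (0:ℝ) < Complex.abs r ^ D := by positivity
        positivity
      nlinarith
    rw [hev] at hlhs
    linarith [hlhs ▸ hext]
  -- two computations of the derivative of eval Hp at z₀
  obtain ⟨d, hd, hpos⟩ := multiset_prod_deriv z₀ hz₀ R hball
  have hHfun : (fun v : ℂ => Hp.eval v)
      = fun v : ℂ => (lam * M - 1) * (R.map (fun r => v - r)).prod := by
    funext v
    conv_lhs => rw [hfactor]
    rw [Polynomial.eval_mul, Polynomial.eval_C, Polynomial.eval_multiset_prod]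
    rw [Multiset.map_map]
    simp
  have hder2 : HasDerivAt (fun v : ℂ => Hp.eval v) ((lam * M - 1) * d) z₀ := by
    rw [hHfun]
    exact hd.const_mul _
  have hder1 : HasDerivAt (fun v : ℂ => Hp.eval v)
      (lam * M * (D * z₀ ^ (D - 1)) - q) z₀ := by
    have h1 : HasDerivAt (fun v : ℂ => lam * M * v ^ D) (lam * M * (D * z₀ ^ (D - 1))) z₀ :=
      (hasDerivAt_pow D z₀).const_mul (lam * M)
    have h2 : HasDerivAt (fun v : ℂ => Qp.eval v) q z₀ := Qp.hasDerivAt z₀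
    have hfun2 : (fun v : ℂ => Hp.eval v) = fun v => lam * M * v ^ D - Qp.eval v := by
      funext v; rw [hHp]; simp
    rw [hfun2]
    exact h1.sub h2
  have hzero : (lam * M - 1) * d = 0 := by
    rw [hder2.unique hder1]
    have : lam * (M:ℂ) * ((D:ℂ) * z₀ ^ (D - 1)) = q := by
      rw [← hlamden]; ring
    rw [this]; ring
  have hd0 : d = 0 := by
    rcases mul_eq_zero.mp hzero with h | h
    · exact absurd h hlcne
    · exact h
  have hRne : R ≠ 0 := by
    intro h0
    rw [h0] at hRcard
    simp at hRcard
    omega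
  have := hpos hRne
  rw [hd0] at this
  simp at this

/-- Bernstein's inequality on the closed unit disk for monic polynomials with
all roots on the unit circle. -/
lemma bernstein_disk (s : Finset ι) (w : ι → ℂ) (hw : ∀ i ∈ s, Complex.abs (w i) = 1)
    (M : ℝ) (hb : ∀ z : ℂ, Complex.abs z = 1 → Complex.abs (∏ i ∈ s, (z - w i)) ≤ M) :
    ∀ z : ℂ, Complex.abs z ≤ 1 →
      Complex.abs ((derivative (∏ i ∈ s, (X - C (w i)))).eval z) ≤ s.card * M := by
  have hbdry : ∀ z : ℂ, Complex.abs z = 1 →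
      Complex.abs ((derivative (∏ i ∈ s, (X - C (w i)))).eval z) ≤ s.card * M := by
    intro z hz1
    set p : ℂ[X] := derivative (∏ i ∈ s, (X - C (w i))) with hp
    have hcont : ContinuousAt (fun r : ℝ => Complex.abs (p.eval ((r : ℂ) * z))) 1 := by
      apply Complex.continuous_abs.continuousAt.comp
      apply (p.continuous_aeval).continuousAt.comp
      exact (Complex.continuous_ofReal.mul continuous_const).continuousAt
    have htend1 : Filter.Tendsto (fun r : ℝ => Complex.abs (p.eval ((r : ℂ) * z)))
        (nhdsWithin 1 (Set.Ioi 1)) (nhds (Complex.abs (p.eval z))) := by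
      have := hcont.tendsto
      simp only [Complex.ofReal_one, one_mul] at this
      exact this.mono_left nhdsWithin_le_nhds
    have htend2 : Filter.Tendsto (fun r : ℝ => (s.card : ℝ) * M * r ^ (s.card - 1))
        (nhdsWithin 1 (Set.Ioi 1)) (nhds ((s.card : ℝ) * M)) := by
      have : ContinuousAt (fun r : ℝ => (s.card : ℝ) * M * r ^ (s.card - 1)) 1 := by
        fun_prop
      have h := this.tendsto.mono_left (nhdsWithin_le_nhds (s := Set.Ioi (1:ℝ)))
      simpa using h
    refine le_of_tendsto_of_tendsto htend1 htend2 ?_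
    filter_upwards [self_mem_nhdsWithin] with r hr
    have hr1 : (1:ℝ) < r := hr
    have habs : Complex.abs ((r : ℂ) * z) = r := by
      rw [map_mul, hz1, Complex.abs_ofReal, abs_of_pos (by linarith), mul_one]
    have := bernstein_exterior s w hw M hb ((r:ℂ) * z) (by rw [habs]; exact hr1)
    rwa [habs] at this
  intro z hz
  exact poly_maxmod _ _ hbdry z hz

/-- A point of maximum on the circle is at distance at least `1/deg` from any root. -/
lemma root_max_separation (s : Finset ι) (w : ι → ℂ) (hw : ∀ i ∈ s, Complex.abs (w i) = 1)
    (M : ℝ) (hM : 0 < M) (hb : ∀ z : ℂ, Complex.abs z = 1 → Complex.abs (∏ i ∈ s, (z - w i)) ≤ M)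
    (a b : ℂ) (ha1 : Complex.abs a = 1) (hb1 : Complex.abs b = 1)
    (haM : Complex.abs (∏ i ∈ s, (a - w i)) = M) (hbz : (∏ i ∈ s, (b - w i)) = 0) :
    1 ≤ (s.card : ℝ) * Complex.abs (a - b) := by
  set Qp : ℂ[X] := ∏ i ∈ s, (X - C (w i)) with hQp
  have hevalQ : ∀ v : ℂ, Qp.eval v = ∏ i ∈ s, (v - w i) := by
    intro v; rw [hQp, Polynomial.eval_prod]; simp
  have hdiff : ∀ x ∈ Metric.closedBall (0:ℂ) 1, DifferentiableAt ℂ (fun v => Qp.eval v) x :=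
    fun x _ => Qp.differentiableAt
  have hbound : ∀ x ∈ Metric.closedBall (0:ℂ) 1,
      ‖deriv (fun v => Qp.eval v) x‖ ≤ (s.card : ℝ) * M := by
    intro x hx
    have hx1 : Complex.abs x ≤ 1 := by
      simpa [Complex.dist_eq, Complex.abs_def'] using Metric.mem_closedBall.mp hx
    have := bernstein_disk s w hw M hb x hx1
    rwa [Polynomial.deriv]
  have hmvt := Convex.norm_image_sub_le_of_norm_deriv_le hdiff hbound
    (convex_closedBall (0:ℂ) 1)
    (by simpa [Complex.dist_eq, Complex.abs_def'] using le_of_eq ha1)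
    (by simpa [Complex.dist_eq, Complex.abs_def'] using le_of_eq hb1)
  rw [hevalQ, hevalQ, hbz, zero_sub, norm_neg] at hmvt
  have hnorm : ‖∏ i ∈ s, (a - w i)‖ = M := haM
  rw [hnorm] at hmvt
  have hab : ‖b - a‖ = Complex.abs (a - b) := by
    rw [← norm_neg]; congr 1; ring
  rw [hab] at hmvt
  nlinarith [hmvt, hM]

open Real in
/-- The pair-of-conjugate-roots identity. -/
lemma pair_identity (t ψ : ℝ) :
    (Complex.exp (t * Complex.I) - Complex.exp (ψ * Complex.I)) *
      (Complex.exp (t * Complex.I) - Complex.exp ((-ψ : ℝ) * Complex.I))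
    = Complex.exp (t * Complex.I) * (2 * (Real.cos t : ℂ) - 2 * (Real.cos ψ : ℂ)) := by
  have h1 : Complex.exp (t * Complex.I) * Complex.exp ((-t : ℝ) * Complex.I) = 1 := by
    rw [← Complex.exp_add]
    norm_num
  have h2 : Complex.exp (ψ * Complex.I) * Complex.exp ((-ψ : ℝ) * Complex.I) = 1 := by
    rw [← Complex.exp_add]
    norm_num
  have hct : 2 * (Real.cos t : ℂ) = Complex.exp (t * Complex.I) + Complex.exp ((-t:ℝ) * Complex.I) := by
    rw [Complex.ofReal_cos, Complex.two_cos]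
    norm_num
  have hcψ : 2 * (Real.cos ψ : ℂ) = Complex.exp (ψ * Complex.I) + Complex.exp ((-ψ:ℝ) * Complex.I) := by
    rw [Complex.ofReal_cos, Complex.two_cos]
    norm_num
  rw [hct, hcψ]
  set u := Complex.exp (t * Complex.I)
  set u' := Complex.exp ((-t:ℝ) * Complex.I)
  set v := Complex.exp (ψ * Complex.I)
  set v' := Complex.exp ((-ψ:ℝ) * Complex.I)
  linear_combination h2 - h1

/-- chord length formula -/
lemma chord_eq (θ φ : ℝ) :
    Complex.abs (Complex.exp (θ * Complex.I) - Complex.exp (φ * Complex.I))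
      = 2 * |Real.sin ((θ - φ) / 2)| := by
  have hfac : Complex.exp (θ * Complex.I) - Complex.exp (φ * Complex.I)
      = Complex.exp (φ * Complex.I) * (Complex.exp (((θ - φ : ℝ)) * Complex.I) - 1) := by
    rw [mul_sub, mul_one, ← Complex.exp_add]
    norm_num
    ring_nf
  rw [hfac, map_mul, Complex.abs_exp_ofReal_mul_I, one_mul]
  set x : ℝ := θ - φ
  have : Complex.exp ((x:ℝ) * Complex.I) - 1
      = ((Real.cos x - 1 : ℝ) : ℂ) + ((Real.sin x : ℝ) : ℂ) * Complex.I := by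
    rw [Complex.exp_mul_I]
    push_cast [Complex.ofReal_cos, Complex.ofReal_sin]
    ring
  rw [this]
  rw [← Complex.mk_eq_add_mul_I, Complex.abs_apply, Complex.normSq_mk]
  have hsq : (Real.cos x - 1) * (Real.cos x - 1) + Real.sin x * Real.sin x
      = 4 * Real.sin (x / 2) ^ 2 := by
    have hc := Real.cos_sq (x/2)
    rw [show 2 * (x/2) = x by ring] at hc
    have hp1 := Real.sin_sq_add_cos_sq (x/2)
    have hp2 := Real.sin_sq_add_cos_sq x
    nlinarith
  rw [hsq]
  rw [show (4 : ℝ) * Real.sin (x/2)^2 = (2 * |Real.sin (x/2)|)^2 by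
    rw [mul_pow, _root_.sq_abs]; ring]
  exact Real.sqrt_sq (by positivity)

open Real in
/-- The real-variable endgame. -/
lemma real_endgame (θ φ : ℝ) (hθ0 : 0 ≤ θ) (hθπ : θ ≤ π) (hφ0 : 0 ≤ φ) (hφπ : φ ≤ π)
    (n : ℕ) (hn : 2 ≤ n) (hsep : 1 ≤ 2 * (n:ℝ) * (2 * |Real.sin ((θ - φ)/2)|)) :
    (1/16 : ℝ) * (Real.sqrt (1 - |Real.cos θ|) / n + Real.sqrt (1 - |Real.cos φ|) / n
      + 1 / (n:ℝ)^2) ≤ |Real.cos θ - Real.cos φ| := by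
  have hnpos : (0:ℝ) < n := by positivity
  have hπ := Real.pi_pos
  set σ : ℝ := |Real.sin ((θ - φ)/2)| with hσ
  set Sg : ℝ := Real.sin ((θ + φ)/2) with hSg
  have hSgnonneg : 0 ≤ Sg :=
    Real.sin_nonneg_of_nonneg_of_le_pi (by linarith) (by linarith)
  -- identity
  have hid : |Real.cos θ - Real.cos φ| = 2 * Sg * σ := by
    rw [Real.cos_sub_cos, abs_mul, abs_mul]
    rw [_root_.abs_of_nonneg hSgnonneg]
    norm_num [hσ]
  -- bound 2 : Sg ≥ (sin θ + sin φ)/2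
  have hb2 : (Real.sin θ + Real.sin φ) / 2 ≤ Sg := by
    have hss : Real.sin θ + Real.sin φ = 2 * Sg * Real.cos ((θ - φ)/2) := by
      have := Real.sin_sub_sin θ (-φ)
      simp only [Real.sin_neg, sub_neg_eq_add] at this
      rw [this, hSg]
      ring_nf
    have hc : Real.cos ((θ - φ)/2) ≤ 1 := Real.cos_le_one _
    nlinarith
  -- bound 3 : Sg ≥ σ
  have hb3 : σ ≤ Sg := by
    set δ : ℝ := |θ - φ| / 2 with hδ
    have habsd : |θ - φ| ≤ π := abs_le.mpr ⟨by linarith, by linarith⟩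
    have habsd0 : 0 ≤ |θ - φ| := abs_nonneg _
    have hδ0 : 0 ≤ δ := by positivity
    have hδπ : δ ≤ π / 2 := by rw [hδ]; linarith
    have hsinδ0 : 0 ≤ Real.sin δ := Real.sin_nonneg_of_nonneg_of_le_pi hδ0 (by linarith)
    have h1 : (θ - φ)/2 = δ ∨ (θ - φ)/2 = -δ := by
      rcases abs_cases (θ - φ) with ⟨he, _⟩ | ⟨he, _⟩
      · left; rw [hδ, he]
      · right; rw [hδ, he]; ring
    have hσδ : σ = Real.sin δ := by
      rcases h1 with h | h
      · rw [hσ, h, _root_.abs_of_nonneg hsinδ0]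
      · rw [hσ, h, Real.sin_neg, abs_neg, _root_.abs_of_nonneg hsinδ0]
    rw [hσδ, hSg]
    set S : ℝ := (θ + φ)/2 with hS
    have hδS : δ ≤ S := by
      rw [hδ, hS]
      rcases abs_cases (θ - φ) with ⟨he, _⟩ | ⟨he, _⟩ <;> rw [he] <;> linarith
    have hSπδ : S ≤ π - δ := by
      rw [hδ, hS]
      rcases abs_cases (θ - φ) with ⟨he, _⟩ | ⟨he, _⟩ <;> rw [he] <;> linarith
    rcases le_or_gt S (π/2) with hScase | hScase
    · exact Real.strictMonoOn_sin.monotoneOn ⟨by linarith, by linarith⟩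
        ⟨by linarith, by linarith⟩ hδS
    · rw [← Real.sin_pi_sub S]
      exact Real.strictMonoOn_sin.monotoneOn ⟨by linarith, by linarith⟩
        ⟨by linarith, by linarith⟩ (by linarith)
  -- bound 4 : σ ≥ 1/(4n)
  have hσ0 : 0 ≤ σ := abs_nonneg _
  have hb4 : 1/(4 * (n:ℝ)) ≤ σ := by
    rw [div_le_iff₀ (by positivity)]
    nlinarith
  -- bound 5 : sin x ≥ sqrt (1 - |cos x|)
  have hb5 : ∀ x : ℝ, 0 ≤ x → x ≤ π → Real.sqrt (1 - |Real.cos x|) ≤ Real.sin x := by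
    intro x h0 hpi
    rw [Real.sin_eq_sqrt_one_sub_cos_sq h0 hpi]
    apply Real.sqrt_le_sqrt
    have h1 : |Real.cos x| ≤ 1 := Real.abs_cos_le_one x
    nlinarith [abs_nonneg (Real.cos x), _root_.sq_abs (Real.cos x)]
  have h5θ := hb5 θ hθ0 hθπ
  have h5φ := hb5 φ hφ0 hφπ
  have hsθ : 0 ≤ Real.sqrt (1 - |Real.cos θ|) := Real.sqrt_nonneg _
  have hsφ : 0 ≤ Real.sqrt (1 - |Real.cos φ|) := Real.sqrt_nonneg _
  -- combine
  rw [hid]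
  set A := Real.sqrt (1 - |Real.cos θ|)
  set B := Real.sqrt (1 - |Real.cos φ|)
  have hrw : A / n = A * (1/(n:ℝ)) := by ring
  have hrw2 : B / n = B * (1/(n:ℝ)) := by ring
  have hrw3 : 1 / (n:ℝ)^2 = (1/(n:ℝ)) * (1/(n:ℝ)) := by ring
  rw [hrw, hrw2, hrw3]
  set t : ℝ := 1/(n:ℝ) with ht
  have ht0 : 0 < t := by positivity
  have hb4' : t / 4 ≤ σ := by
    have : t / 4 = 1/(4*(n:ℝ)) := by rw [ht]; ring
    rw [this]; exact hb4
  -- final nlinarith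
  nlinarith [mul_le_mul hb4' hb2 (by linarith) hσ0, sq_nonneg (σ - t/4),
    mul_le_mul_of_nonneg_left (add_le_add h5θ h5φ) (le_of_lt (by positivity : (0:ℝ) < t/4)),
    mul_nonneg hσ0 hSgnonneg]

open Real in
lemma key_pair (z : ℕ → ℝ) (hz : IsLejaSeq z) (n j k : ℕ) (hn : 2 ≤ n)
    (hj1 : 1 ≤ j) (hjk : j < k) (hkn : k ≤ n) :
    (1/16 : ℝ) * (Real.sqrt (1 - |z j|) / n + Real.sqrt (1 - |z k|) / n + 1 / (n:ℝ)^2)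
      ≤ |z j - z k| := by
  have hk2 : 2 ≤ k := by omega
  have hmem : ∀ i, 1 ≤ i → z i ∈ Set.Icc (-1:ℝ) 1 := by
    intro i hi
    rcases eq_or_lt_of_le hi with h | h
    · rw [← h]; exact hz.1
    · exact (hz.2 i (by omega)).1
  have leja := (hz.2 k hk2).2
  set s : Finset ℕ := Finset.Ico 1 k with hs
  have hcard : s.card = k - 1 := by rw [hs, Nat.card_Ico]
  set M₀ : ℝ := ∏ i ∈ s, |z k - z i| with hM₀
  -- M₀ is positive
  have hM₀pos : 0 < M₀ := by
    have hinf : (Set.Icc (-1:ℝ) 1).Infinite := Set.Icc_infinite (by norm_num : (-1:ℝ) < 1)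
    have hne : ((Set.Icc (-1:ℝ) 1) \ (↑(s.image z) : Set ℝ)).Nonempty :=
      (hinf.diff (Finset.finite_toSet _)).nonempty
    obtain ⟨y₀, hy₀Icc, hy₀not⟩ := hne
    have hpos : 0 < ∏ i ∈ s, |y₀ - z i| := by
      apply Finset.prod_pos
      intro i hi
      rw [abs_pos, sub_ne_zero]
      intro h
      exact hy₀not (by
        simp only [Finset.coe_image, Set.mem_image, Finset.mem_coe]
        exact ⟨i, hi, h.symm⟩)
    exact lt_of_lt_of_le hpos (leja y₀ hy₀Icc)
  -- the circle polynomial data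
  set ψ : ℕ → ℝ := fun i => Real.arccos (z i) with hψ
  set S : Finset (ℕ × Bool) := s ×ˢ (Finset.univ : Finset Bool) with hS
  set W : ℕ × Bool → ℂ :=
    fun p => Complex.exp (((if p.2 then ψ p.1 else -ψ p.1) : ℝ) * Complex.I) with hW
  have hw : ∀ p ∈ S, Complex.abs (W p) = 1 := fun p _ => Complex.abs_exp_ofReal_mul_I _
  have hScard : S.card = (k - 1) * 2 := by
    rw [hS, Finset.card_product, hcard]
    simp
  -- evaluation identity
  have heval : ∀ t : ℝ, Complex.abs (∏ p ∈ S, (Complex.exp ((t:ℝ) * Complex.I) - W p))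
      = 2^(k-1) * ∏ i ∈ s, |Real.cos t - z i| := by
    intro t
    rw [map_prod, hS, Finset.prod_product]
    have hfac : ∀ i ∈ s,
        (∏ b : Bool, Complex.abs (Complex.exp ((t:ℝ) * Complex.I) - W (i, b)))
          = 2 * |Real.cos t - z i| := by
      intro i hi
      rw [Fintype.prod_bool]
      have hWt : W (i, true) = Complex.exp ((ψ i : ℝ) * Complex.I) := by simp [hW]
      have hWf : W (i, false) = Complex.exp (((-ψ i : ℝ)) * Complex.I) := by simp [hW]
      rw [hWt, hWf, ← map_mul, pair_identity t (ψ i)]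
      rw [map_mul, Complex.abs_exp_ofReal_mul_I, one_mul]
      have hcos : Real.cos (ψ i) = z i := by
        rw [hψ]
        obtain ⟨h1, h2⟩ := hmem i (Finset.mem_Ico.mp hi).1
        exact Real.cos_arccos h1 h2
      have : (2 * (Real.cos t : ℂ) - 2 * (Real.cos (ψ i) : ℂ))
          = ((2 * Real.cos t - 2 * Real.cos (ψ i) : ℝ) : ℂ) := by push_cast; ring
      rw [this, Complex.abs_ofReal, hcos]
      rw [show 2 * Real.cos t - 2 * z i = 2 * (Real.cos t - z i) by ring, abs_mul]
      norm_num
    calc ∏ i ∈ s, ∏ b : Bool, Complex.abs (Complex.exp ((t:ℝ) * Complex.I) - W (i, b))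
        = ∏ i ∈ s, (2 * |Real.cos t - z i|) := Finset.prod_congr rfl hfac
      _ = 2^(k-1) * ∏ i ∈ s, |Real.cos t - z i| := by
          rw [Finset.prod_mul_distrib, Finset.prod_const, hcard]
  set M : ℝ := 2^(k-1) * M₀ with hM
  have hMpos : 0 < M := by positivity
  -- boundary bound
  have hbd : ∀ u : ℂ, Complex.abs u = 1 → Complex.abs (∏ p ∈ S, (u - W p)) ≤ M := by
    intro u hu
    have hu' : Complex.exp ((u.arg : ℝ) * Complex.I) = u := by
      have := Complex.abs_mul_exp_arg_mul_I u
      rwa [hu, Complex.ofReal_one, one_mul] at this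
    rw [← hu', heval (u.arg)]
    rw [hM]
    have hcosIcc : Real.cos u.arg ∈ Set.Icc (-1:ℝ) 1 :=
      ⟨Real.neg_one_le_cos _, Real.cos_le_one _⟩
    have := leja (Real.cos u.arg) hcosIcc
    have h2 : (0:ℝ) < 2^(k-1) := by positivity
    rw [hM₀]
    nlinarith [this]
  -- the max point and the root
  set θ : ℝ := Real.arccos (z k) with hθ
  set φ : ℝ := Real.arccos (z j) with hφ
  have hzk := hmem k (by omega)
  have hzj := hmem j hj1
  have hcosθ : Real.cos θ = z k := Real.cos_arccos hzk.1 hzk.2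
  have hcosφ : Real.cos φ = z j := Real.cos_arccos hzj.1 hzj.2
  set a : ℂ := Complex.exp ((θ:ℝ) * Complex.I) with ha
  set b : ℂ := Complex.exp ((φ:ℝ) * Complex.I) with hb
  have haM : Complex.abs (∏ p ∈ S, (a - W p)) = M := by
    rw [ha, heval θ, hcosθ, hM, hM₀]
  have hbz : (∏ p ∈ S, (b - W p)) = 0 := by
    apply Finset.prod_eq_zero (i := (j, true))
    · rw [hS, Finset.mem_product]
      exact ⟨Finset.mem_Ico.mpr ⟨hj1, hjk⟩, Finset.mem_univ _⟩
    · rw [hb, hW]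
      simp [hφ, hψ]
  have hsep := root_max_separation S W hw M hMpos hbd a b
    (Complex.abs_exp_ofReal_mul_I _) (Complex.abs_exp_ofReal_mul_I _) haM hbz
  -- convert to the real inequality
  have hchord : Complex.abs (a - b) = 2 * |Real.sin ((θ - φ)/2)| := chord_eq θ φ
  have hsep' : 1 ≤ 2 * (n:ℝ) * (2 * |Real.sin ((θ - φ)/2)|) := by
    rw [← hchord]
    refine le_trans hsep ?_
    apply mul_le_mul_of_nonneg_right _ (Complex.abs.nonneg _)
    rw [hScard]
    push_cast
    have : (k:ℝ) - 1 ≤ n := by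
      have : (k:ℝ) ≤ n := by exact_mod_cast hkn
      linarith
    have hk1 : ((k-1 : ℕ) : ℝ) = (k:ℝ) - 1 := by
      have : (1:ℕ) ≤ k := by omega
      push_cast [Nat.cast_sub this]
      ring
    nlinarith [hk1]
  have hend := real_endgame θ φ (Real.arccos_nonneg _) (Real.arccos_le_pi _)
    (Real.arccos_nonneg _) (Real.arccos_le_pi _) n hn hsep'
  rw [hcosθ, hcosφ] at hend
  rw [show |z j - z k| = |z k - z j| from abs_sub_comm _ _]
  calc (1/16 : ℝ) * (Real.sqrt (1 - |z j|) / n + Real.sqrt (1 - |z k|) / n + 1 / (n:ℝ)^2)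
      = (1/16 : ℝ) * (Real.sqrt (1 - |z k|) / n + Real.sqrt (1 - |z j|) / n + 1 / (n:ℝ)^2) := by
        ring
    _ ≤ |z k - z j| := hend

/-- Leja points on `[-1,1]` satisfy the Taylor–Totik distancing rule: there is a
constant `c > 0` such that for every Leja sequence, every `n ≥ 2` and all
`1 ≤ j, k ≤ n` with `j ≠ k`,
`|z j - z k| ≥ c(√(1-|z j|)/n + √(1-|z k|)/n + 1/n²)`. -/
theorem leja_points_satisfy_distancing_rule :
    ∃ c : ℝ, 0 < c ∧ ∀ z : ℕ → ℝ, IsLejaSeq z →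
      ∀ n : ℕ, 2 ≤ n → ∀ j k : ℕ, 1 ≤ j → j ≤ n → 1 ≤ k → k ≤ n → j ≠ k →
        c * (Real.sqrt (1 - |z j|) / n + Real.sqrt (1 - |z k|) / n + 1 / (n : ℝ) ^ 2)
          ≤ |z j - z k| := by
  refine ⟨1/16, by norm_num, ?_⟩
  intro z hz n hn j k hj1 hjn hk1 hkn hjk
  rcases lt_or_gt_of_ne hjk with h | h
  · exact key_pair z hz n j k hn hj1 h hkn
  · have hkey := key_pair z hz n k j hn hk1 h hjn
    rw [abs_sub_comm] at hkey
    linarith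
end

section
/- There exists a constant c₂ ≥ 1 such that for every n ≥ 1 and every x ∈ [−1,1], (1/c₂) ρ_{1/n}(x) ≤ √(1−|x|)/n + 1/n² ≤ c₂ ρ_{1/n}(x), where ρ_{1/n}(x) is the distance (in ℂ) from x to the ellipse I_{1/n}. -/
lemma jouk_diff (w v : ℂ) (hw : w ≠ 0) (hv : v ≠ 0) :
    (w + w⁻¹) / 2 - (v + v⁻¹) / 2 = (w - v) * (w - v⁻¹) / (2 * w) := by
  field_simp
  ring

/-- Pure arithmetic: product lower bound. -/
lemma arith_prod (ε S A B : ℝ) (hε0 : 0 < ε) (hS0 : 0 ≤ S)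
    (hA : ε ≤ A) (hB : ε ≤ B) (hAB : 2 * S ≤ A + B) :
    S * ε + ε ^ 2 ≤ 2 * (A * B) := by
  have hA0 : 0 ≤ A := le_trans hε0.le hA
  have hB0 : 0 ≤ B := le_trans hε0.le hB
  nlinarith [mul_le_mul_of_nonneg_right hA hB0, mul_le_mul_of_nonneg_right hB hA0,
    mul_le_mul_of_nonneg_left hAB hε0.le, mul_le_mul_of_nonneg_left hB hε0.le]

lemma arith_div_step (T P r : ℝ) (h : T ≤ 2 * P) (hT : 0 ≤ T) (hr0 : 0 < r) (hr2 : r ≤ 2) :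
    T / 8 ≤ P / (2 * r) := by
  rw [div_le_div_iff₀ (by norm_num) (by positivity)]
  nlinarith

/-- Pure arithmetic: upper bound squared estimate. -/
lemma arith_upper (ε S s b t q a x : ℝ) (hε0 : 0 < ε) (hε1 : ε ≤ 1)
    (hS0 : 0 ≤ S) (hSsq : S ^ 2 = s) (hs0 : 0 ≤ s)
    (hb0 : 0 ≤ b) (hbε : b ≤ ε) (ht0 : 0 ≤ t) (htsq : t ^ 2 = 1 - q ^ 2)
    (hq0 : 0 ≤ 1 - q ^ 2) (h2 : 1 - q ^ 2 ≤ a ^ 2 - x ^ 2)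
    (ha1 : 1 ≤ a) (haup : a ≤ 1 + ε ^ 2 / 2) (hax : |x| ≤ 1) (hsx : s = 1 - |x|) :
    b * t ≤ 2 * (S * ε + ε ^ 2) := by
  have hax0 : 0 ≤ |x| := abs_nonneg x
  have hxsq : x ^ 2 = |x| ^ 2 := (sq_abs x).symm
  have hε2 : ε ^ 2 ≤ 1 := by nlinarith
  have haa : a ^ 2 ≤ (1 + ε ^ 2 / 2) ^ 2 :=
    pow_le_pow_left₀ (by linarith) haup 2
  have h3 : a ^ 2 - x ^ 2 ≤ (ε ^ 2 / 2 + s) * 3 := by nlinarith [sq_nonneg ε, sq_nonneg s]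
  have h4 : (b * t) ^ 2 ≤ ε ^ 2 * ((ε ^ 2 / 2 + s) * 3) := by
    have he : (b * t) ^ 2 = b ^ 2 * t ^ 2 := by ring
    rw [he, htsq]
    apply mul_le_mul (by nlinarith) (by linarith) hq0 (by positivity)
  have hT0 : 0 ≤ S * ε + ε ^ 2 := by positivity
  have hbt0 : 0 ≤ b * t := mul_nonneg hb0 ht0
  have hS2 : S ^ 2 * ε ^ 2 = s * ε ^ 2 := by rw [hSsq]
  have h5 : (b * t) ^ 2 ≤ (2 * (S * ε + ε ^ 2)) ^ 2 := by
    nlinarith [hS2, mul_nonneg hS0 (pow_nonneg hε0.le 3),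
      mul_nonneg hs0 (sq_nonneg ε), pow_nonneg hε0.le 4]
  have h6 := Real.sqrt_le_sqrt h5
  rwa [Real.sqrt_sq hbt0, Real.sqrt_sq (by positivity)] at h6

open Complex in
/-- There is a constant `c₂ ≥ 1` such that for all `n ≥ 1` and `x ∈ [-1,1]`,
`(1/c₂) ρ_{1/n}(x) ≤ √(1-|x|)/n + 1/n² ≤ c₂ ρ_{1/n}(x)`. -/
theorem rho_comparable_to_sqrt_dist :
    ∃ c₂ : ℝ, 1 ≤ c₂ ∧ ∀ n : ℕ, 1 ≤ n → ∀ x ∈ Set.Icc (-1 : ℝ) 1,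
      (1 / c₂) * rho n x ≤ Real.sqrt (1 - |x|) / n + 1 / (n : ℝ) ^ 2 ∧
      Real.sqrt (1 - |x|) / n + 1 / (n : ℝ) ^ 2 ≤ c₂ * rho n x := by
  refine ⟨8, by norm_num, fun n hn x hx => ?_⟩
  obtain ⟨hx1, hx2⟩ := hx
  have hn' : (1 : ℝ) ≤ (n : ℝ) := by exact_mod_cast hn
  have hn0 : (0 : ℝ) < (n : ℝ) := by linarith
  set ε : ℝ := 1 / (n : ℝ) with hεdef
  clear_value ε
  have hε0 : 0 < ε := by rw [hεdef]; positivity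
  have hε1 : ε ≤ 1 := by rw [hεdef]; rw [div_le_one hn0]; exact hn'
  have hax : |x| ≤ 1 := abs_le.2 ⟨hx1, hx2⟩
  have hax0 : 0 ≤ |x| := abs_nonneg x
  set s : ℝ := 1 - |x| with hsdef
  clear_value s
  have hs0 : 0 ≤ s := by rw [hsdef]; linarith
  set S : ℝ := Real.sqrt s with hSdef
  clear_value S
  have hS0 : 0 ≤ S := by rw [hSdef]; exact Real.sqrt_nonneg s
  have hSsq : S ^ 2 = s := by rw [hSdef]; exact Real.sq_sqrt hs0
  set T : ℝ := S * ε + ε ^ 2 with hTdef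
  clear_value T
  have hT0 : 0 ≤ T := by rw [hTdef]; positivity
  have hTeq : S / (n : ℝ) + 1 / (n : ℝ) ^ 2 = T := by
    rw [hTdef, hεdef]; field_simp
  rw [hTeq]
  -- basic data about r
  set r : ℝ := 1 + 1 / (n : ℝ) with hrdef
  clear_value r
  have hrε : r = 1 + ε := by rw [hrdef, hεdef]
  have hr1 : 1 ≤ r := by rw [hrε]; linarith
  have hr0 : 0 < r := by linarith
  have hr2 : r ≤ 2 := by rw [hrε]; linarith
  -- the point v on the unit circle above x
  have hx2' : 0 ≤ 1 - x ^ 2 := by nlinarith only [_root_.sq_abs x, hax, hax0]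
  set t0 : ℝ := Real.sqrt (1 - x ^ 2) with ht0def
  clear_value t0
  have ht00 : 0 ≤ t0 := by rw [ht0def]; exact Real.sqrt_nonneg _
  have ht0sq : t0 ^ 2 = 1 - x ^ 2 := by rw [ht0def]; exact Real.sq_sqrt hx2'
  set v : ℂ := (x : ℂ) + (t0 : ℂ) * Complex.I with hvdef
  clear_value v
  have habsv : ‖v‖ = 1 := by
    rw [hvdef, Complex.norm_add_mul_I]
    rw [ht0sq]
    simp
  have hv0 : v ≠ 0 := by
    intro h; rw [h] at habsv; simp at habsv
  have hvinv : v⁻¹ = (x : ℂ) - (t0 : ℂ) * Complex.I := by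
    rw [Complex.inv_eq_conj (by exact habsv)]
    rw [hvdef]
    simp [Complex.ext_iff]
  have hvx : ((v + v⁻¹) / 2 : ℂ) = (x : ℂ) := by
    rw [hvinv, hvdef]; ring
  have ht0S : S ≤ t0 := by
    rw [hSdef, ht0def]
    apply Real.sqrt_le_sqrt
    nlinarith only [_root_.sq_abs x, hax, hax0, hsdef]
  -- nonemptiness of the ellipse
  have hne : (joukowskiEllipse n).Nonempty := by
    refine ⟨((r : ℂ) + (r : ℂ)⁻¹) / 2, (r : ℂ), ?_, rfl⟩
    rw [Complex.norm_real, Real.norm_eq_abs, _root_.abs_of_pos hr0, hrdef]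
  -- LOWER BOUND for every point of the ellipse
  have lower : ∀ ζ ∈ joukowskiEllipse n, T / 8 ≤ dist (x : ℂ) ζ := by
    rintro ζ ⟨w, hwabs, rfl⟩
    have hwabs' : ‖w‖ = r := by rw [hrdef]; exact hwabs
    have hw0 : w ≠ 0 := by
      intro h; rw [h] at hwabs'; simp at hwabs'; linarith
    have hdiff : (w + w⁻¹) / 2 - (x : ℂ) = (w - v) * (w - v⁻¹) / (2 * w) := by
      rw [← hvx]; exact jouk_diff w v hw0 hv0
    have hdist : dist (x : ℂ) ((w + w⁻¹) / 2)
        = ‖w - v‖ * ‖w - v⁻¹‖ / (2 * r) := by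
      rw [dist_comm, Complex.dist_eq, hdiff]
      rw [norm_div, norm_mul, norm_mul, Complex.norm_two, hwabs']
    set A : ℝ := ‖w - v‖ with hAdef
    clear_value A
    set B : ℝ := ‖w - v⁻¹‖ with hBdef
    clear_value B
    have habsvinv : ‖v⁻¹‖ = 1 := by rw [norm_inv, habsv]; norm_num
    have hA : ε ≤ A := by
      have h := norm_sub_norm_le w v
      rw [hwabs', habsv] at h
      rw [hrε] at h; linarith
    have hB : ε ≤ B := by
      have h := norm_sub_norm_le w v⁻¹
      rw [hwabs', habsvinv] at h
      rw [hrε] at h; linarith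
    have hAB : 2 * S ≤ A + B := by
      have htri : ‖v - v⁻¹‖ ≤ ‖v - w‖ + ‖w - v⁻¹‖ := by
        have h := norm_add_le (v - w) (w - v⁻¹)
        rw [sub_add_sub_cancel] at h
        exact h
      have hvv : ‖v - v⁻¹‖ = 2 * t0 := by
        rw [hvinv, hvdef]
        have he : (x : ℂ) + (t0 : ℂ) * Complex.I - ((x : ℂ) - (t0 : ℂ) * Complex.I)
            = ((2 * t0 : ℝ) : ℂ) * Complex.I := by push_cast; ring
        rw [he, norm_mul, Complex.norm_I, Complex.norm_real, Real.norm_eq_abs, mul_one,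
          _root_.abs_of_nonneg (by linarith)]
      rw [hvv] at htri
      rw [norm_sub_rev v w] at htri
      rw [← hAdef, ← hBdef] at htri
      linarith
    have hprod : T ≤ 2 * (A * B) := by
      rw [hTdef]
      exact arith_prod ε S A B hε0 hS0 hA hB hAB
    rw [hdist]
    exact arith_div_step T (A * B) r hprod hT0 hr0 hr2
  have hrho_lb : T / 8 ≤ rho n x := by
    by_contra h
    push_neg at h
    rw [rho] at h
    obtain ⟨y, hy, hylt⟩ := (Metric.infDist_lt_iff hne).1 h
    exact absurd hylt (not_lt.2 (lower y hy))
  -- UPPER BOUND : a well-chosen point of the ellipse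
  set a : ℝ := (r + r⁻¹) / 2 with hadef
  clear_value a
  have hainv : r⁻¹ ≤ 1 := by rw [inv_le_one_iff₀]; right; exact hr1
  have hainv0 : 0 < r⁻¹ := by positivity
  have hrinv : r * r⁻¹ = 1 := mul_inv_cancel₀ (ne_of_gt hr0)
  have ha1 : 1 ≤ a := by rw [hadef]; nlinarith only [hrinv, hr0, sq_nonneg (r - 1)]
  have ha0 : 0 < a := by linarith
  have haup : a ≤ 1 + ε ^ 2 / 2 := by
    rw [hadef, hrε]; rw [hrε] at hrinv
    nlinarith only [hrinv, hε0, mul_nonneg (mul_nonneg hε0.le hε0.le) hε0.le]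
  set b : ℝ := (r - r⁻¹) / 2 with hbdef
  clear_value b
  have hb0 : 0 ≤ b := by rw [hbdef]; linarith only [hainv, hr1]
  have hbε : b ≤ ε := by
    rw [hbdef, hrε]; rw [hrε] at hrinv
    nlinarith only [hrinv, hε0, mul_nonneg hε0.le hε0.le]
  set q : ℝ := x / a with hqdef
  clear_value q
  have haq : a * q = x := by rw [hqdef]; field_simp
  have hq1 : q ^ 2 ≤ 1 := by
    rw [hqdef, div_pow, div_le_one (by positivity)]
    nlinarith only [_root_.sq_abs x, hax, hax0, ha1]
  have hq0 : 0 ≤ 1 - q ^ 2 := by linarith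
  set t : ℝ := Real.sqrt (1 - q ^ 2) with htdef
  clear_value t
  have ht0 : 0 ≤ t := by rw [htdef]; exact Real.sqrt_nonneg _
  have htsq : t ^ 2 = 1 - q ^ 2 := by rw [htdef]; exact Real.sq_sqrt hq0
  set u : ℂ := (q : ℂ) + (t : ℂ) * Complex.I with hudef
  clear_value u
  have habsu : ‖u‖ = 1 := by
    rw [hudef, Complex.norm_add_mul_I, htsq]
    simp
  have hu0 : u ≠ 0 := by intro h; rw [h] at habsu; simp at habsu
  have huinv : u⁻¹ = (q : ℂ) - (t : ℂ) * Complex.I := by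
    rw [Complex.inv_eq_conj (by exact habsu)]
    rw [hudef]; simp [Complex.ext_iff]
  set w : ℂ := (r : ℂ) * u with hwdef
  clear_value w
  have hwmem : ((w + w⁻¹) / 2 : ℂ) ∈ joukowskiEllipse n := by
    refine ⟨w, ?_, rfl⟩
    rw [← hrdef, hwdef, norm_mul, habsu, Complex.norm_real, Real.norm_eq_abs, _root_.abs_of_pos hr0, mul_one]
  have hwinv : w⁻¹ = ((r⁻¹ : ℝ) : ℂ) * ((q : ℂ) - (t : ℂ) * Complex.I) := by
    rw [hwdef, mul_inv, huinv, ← Complex.ofReal_inv]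
  have hζeq : ((w + w⁻¹) / 2 : ℂ) = (x : ℂ) + ((b * t : ℝ) : ℂ) * Complex.I := by
    rw [hwinv, hwdef, hudef, ← haq, hadef, hbdef]
    have hr0' : (r : ℂ) ≠ 0 := by
      simpa using ne_of_gt hr0
    push_cast
    field_simp
    ring
  have hdistw : dist (x : ℂ) ((w + w⁻¹) / 2) = b * t := by
    rw [Complex.dist_eq, hζeq]
    have he : (x : ℂ) - ((x : ℂ) + ((b * t : ℝ) : ℂ) * Complex.I)
        = ((-(b * t) : ℝ) : ℂ) * Complex.I := by push_cast; ring
    rw [he, norm_mul, Complex.norm_I, Complex.norm_real, Real.norm_eq_abs, mul_one, abs_neg,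
      _root_.abs_of_nonneg (mul_nonneg hb0 ht0)]
  have h2 : 1 - q ^ 2 ≤ a ^ 2 - x ^ 2 := by
    rw [hqdef, div_pow]
    have he : 1 - x ^ 2 / a ^ 2 = (a ^ 2 - x ^ 2) / a ^ 2 := by field_simp
    rw [he]
    apply div_le_self (by nlinarith only [_root_.sq_abs x, hax, hax0, ha1]) (by nlinarith only [ha1])
  have hrho_ub : rho n x ≤ 2 * T := by
    have h1 : rho n x ≤ b * t := by
      rw [rho, ← hdistw]
      exact Metric.infDist_le_dist_of_mem hwmem
    have h6 : b * t ≤ 2 * T := by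
      rw [hTdef]
      exact arith_upper ε S s b t q a x hε0 hε1 hS0 hSsq hs0 hb0 hbε ht0 htsq hq0 h2
        ha1 haup hax hsdef
    linarith
  constructor
  · linarith
  · linarith
end

section
/- For every constant c₁ > 0 there exists a constant c > 0 such that for every n ≥ 1 and all x, y ∈ [−1,1] satisfying |x − y| ≥ c₁( √(1−|x|)/n + √(1−|y|)/n + 1/n² ), one has |arccos x − arccos y| ≥ c/n. (Equivalently, the arcsine measure of the subinterval of [−1,1] between x and y is at least c/(πn).) -/
open Real

private lemma abs_sin_sub_sin_le' (a b : ℝ) : |Real.sin a - Real.sin b| ≤ |a - b| := by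
  rw [Real.sin_sub_sin]
  calc |2 * Real.sin ((a - b) / 2) * Real.cos ((a + b) / 2)|
      = 2 * |Real.sin ((a - b) / 2)| * |Real.cos ((a + b) / 2)| := by
        rw [abs_mul, abs_mul, abs_two]
    _ ≤ 2 * |(a - b) / 2| * 1 := by
        apply mul_le_mul (by
          have := Real.abs_sin_le_abs (x := (a - b) / 2)
          nlinarith) (Real.abs_cos_le_one _) (abs_nonneg _) (by positivity)
    _ = |a - b| := by rw [abs_div, abs_two]; ring

/-- Key estimate: `|cos a - cos b| ≤ |a - b| * (|sin a| + |a - b|)`. -/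
private lemma abs_cos_sub_cos_le (a b : ℝ) :
    |Real.cos a - Real.cos b| ≤ |a - b| * (|Real.sin a| + |a - b|) := by
  rw [Real.cos_sub_cos]
  have h1 : |Real.sin ((a - b) / 2)| ≤ |a - b| / 2 := by
    have := Real.abs_sin_le_abs (x := (a - b) / 2)
    rwa [abs_div, abs_two] at this
  have h2 : |Real.sin ((a + b) / 2)| ≤ |Real.sin a| + |a - b| / 2 := by
    have h3 := abs_sin_sub_sin_le' ((a + b) / 2) a
    have h4 : |(a + b) / 2 - a| = |a - b| / 2 := by
      rw [show (a + b) / 2 - a = -((a - b) / 2) by ring, abs_neg, abs_div, abs_two]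
    have := abs_sub_abs_le_abs_sub (Real.sin ((a + b) / 2)) (Real.sin a)
    linarith [h3, h4 ▸ h3]
  calc |-2 * Real.sin ((a + b) / 2) * Real.sin ((a - b) / 2)|
      = 2 * |Real.sin ((a + b) / 2)| * |Real.sin ((a - b) / 2)| := by
        rw [abs_mul, abs_mul, abs_neg, abs_two]
    _ ≤ 2 * (|Real.sin a| + |a - b| / 2) * (|a - b| / 2) := by
        apply mul_le_mul _ h1 (abs_nonneg _) (by positivity)
        nlinarith [abs_nonneg (Real.sin ((a + b) / 2))]
    _ ≤ |a - b| * (|Real.sin a| + |a - b|) := by nlinarith [abs_nonneg (a - b), abs_nonneg (Real.sin a)]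

/-- `√(1 - x²) ≤ √2 * √(1 - |x|)` for `|x| ≤ 1`. -/
private lemma sqrt_one_sub_sq_le (x : ℝ) (hx : |x| ≤ 1) :
    Real.sqrt (1 - x ^ 2) ≤ Real.sqrt 2 * Real.sqrt (1 - |x|) := by
  rw [← Real.sqrt_mul (by norm_num)]
  apply Real.sqrt_le_sqrt
  have h := abs_nonneg x
  have : x ^ 2 = |x| ^ 2 := (sq_abs x).symm
  nlinarith

set_option maxHeartbeats 1600000 in
/-- **(Lemma 3.2 specialized to `[-1,1]`.)** For every `c₁ > 0` there is a `c > 0` such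
that for all `n ≥ 1` and `x, y ∈ [-1,1]` satisfying the distancing rule
`|x - y| ≥ c₁(√(1-|x|)/n + √(1-|y|)/n + 1/n²)`, one has
`|arccos x - arccos y| ≥ c/n` (i.e. the arcsine measure of the arc between `x` and `y`
is at least `c/(πn)`). -/
theorem arccos_gap_of_distancing (c₁ : ℝ) (hc₁ : 0 < c₁) :
    ∃ c : ℝ, 0 < c ∧ ∀ n : ℕ, 1 ≤ n →
      ∀ x ∈ Set.Icc (-1 : ℝ) 1, ∀ y ∈ Set.Icc (-1 : ℝ) 1,
        c₁ * (Real.sqrt (1 - |x|) / n + Real.sqrt (1 - |y|) / n + 1 / (n : ℝ) ^ 2)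
            ≤ |x - y| →
          c / n ≤ |Real.arccos x - Real.arccos y| := by
  refine ⟨min c₁ (Real.sqrt c₁), lt_min hc₁ (Real.sqrt_pos.2 hc₁), ?_⟩
  intro n hn x hx y hy hdist
  set c := min c₁ (Real.sqrt c₁) with hc
  have hcpos : 0 < c := lt_min hc₁ (Real.sqrt_pos.2 hc₁)
  have hnpos : (0 : ℝ) < n := by exact_mod_cast hn
  by_contra hcon
  push_neg at hcon
  set t := |Real.arccos x - Real.arccos y| with ht
  have htnn : 0 ≤ t := abs_nonneg _
  -- bounds on |x - y|
  have hxx : Real.cos (Real.arccos x) = x := Real.cos_arccos hx.1 hx.2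
  have hyy : Real.cos (Real.arccos y) = y := Real.cos_arccos hy.1 hy.2
  have hsinx : |Real.sin (Real.arccos x)| = Real.sqrt (1 - x ^ 2) := by
    rw [Real.sin_arccos, abs_of_nonneg (Real.sqrt_nonneg _)]
  have hsiny : |Real.sin (Real.arccos y)| = Real.sqrt (1 - y ^ 2) := by
    rw [Real.sin_arccos, abs_of_nonneg (Real.sqrt_nonneg _)]
  have hx1 : |x| ≤ 1 := abs_le.2 ⟨hx.1, hx.2⟩
  have hy1 : |y| ≤ 1 := abs_le.2 ⟨hy.1, hy.2⟩
  set s := Real.sqrt (1 - |x|) with hs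
  set s' := Real.sqrt (1 - |y|) with hs'
  have hsx : Real.sqrt (1 - x ^ 2) ≤ Real.sqrt 2 * s := sqrt_one_sub_sq_le x hx1
  have hsy : Real.sqrt (1 - y ^ 2) ≤ Real.sqrt 2 * s' := sqrt_one_sub_sq_le y hy1
  have hb1 : |x - y| ≤ t * (Real.sqrt 2 * s + t) := by
    have := _root_.abs_cos_sub_cos_le (Real.arccos x) (Real.arccos y)
    rw [hxx, hyy, hsinx] at this
    calc |x - y| ≤ t * (Real.sqrt (1 - x ^ 2) + t) := this
      _ ≤ t * (Real.sqrt 2 * s + t) := by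
          apply mul_le_mul_of_nonneg_left (by linarith) htnn
  have hb2 : |x - y| ≤ t * (Real.sqrt 2 * s' + t) := by
    have := _root_.abs_cos_sub_cos_le (Real.arccos y) (Real.arccos x)
    rw [hxx, hyy, hsiny, abs_sub_comm y x, abs_sub_comm (Real.arccos y)] at this
    calc |x - y| ≤ t * (Real.sqrt (1 - y ^ 2) + t) := this
      _ ≤ t * (Real.sqrt 2 * s' + t) := by
          apply mul_le_mul_of_nonneg_left (by linarith) htnn
  -- constants
  have hsqrt2 : Real.sqrt 2 ≤ 2 := by
    have h4 : Real.sqrt 4 = 2 := by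
      rw [show (4 : ℝ) = 2 ^ 2 by norm_num, Real.sqrt_sq (by norm_num : (0:ℝ) ≤ 2)]
    calc Real.sqrt 2 ≤ Real.sqrt 4 := Real.sqrt_le_sqrt (by norm_num)
      _ = 2 := h4
  have hcc1 : c ≤ c₁ := min_le_left _ _
  have hc2 : c ^ 2 ≤ c₁ := by
    have h := min_le_right c₁ (Real.sqrt c₁)
    calc c ^ 2 ≤ Real.sqrt c₁ ^ 2 := by nlinarith [hcpos.le]
      _ = c₁ := Real.sq_sqrt hc₁.le
  have hsnn : 0 ≤ s := Real.sqrt_nonneg _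
  have hsnn' : 0 ≤ s' := Real.sqrt_nonneg _
  -- combine: 2 |x - y| ≤ t (√2 (s + s') + 2t) < (c/n)(√2(s+s') + 2c/n) ≤ 2 c₁ (...)
  have hlt : t < c / n := hcon
  have key : 2 * |x - y| < (c / n) * (Real.sqrt 2 * (s + s') + 2 * (c / n)) := by
    have hfac : 0 < Real.sqrt 2 * (s + s') + 2 * (c / n) := by positivity
    have h1 : 2 * |x - y| ≤ t * (Real.sqrt 2 * (s + s') + 2 * t) := by nlinarith
    calc 2 * |x - y| ≤ t * (Real.sqrt 2 * (s + s') + 2 * t) := h1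
      _ ≤ t * (Real.sqrt 2 * (s + s') + 2 * (c / n)) := by
          apply mul_le_mul_of_nonneg_left (by nlinarith) htnn
      _ < (c / n) * (Real.sqrt 2 * (s + s') + 2 * (c / n)) := by
          apply mul_lt_mul_of_pos_right hlt hfac
  have hrhs : (c / n) * (Real.sqrt 2 * (s + s') + 2 * (c / n))
      ≤ 2 * (c₁ * (s / n + s' / n + 1 / (n : ℝ) ^ 2)) := by
    have e1 : (c / n) * (Real.sqrt 2 * (s + s')) ≤ 2 * c₁ * (s / n + s' / n) := by
      have heq : (c / n) * (Real.sqrt 2 * (s + s')) = (c * Real.sqrt 2) * (s / n + s' / n) := by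
        field_simp
      rw [heq]
      have hfac : c * Real.sqrt 2 ≤ 2 * c₁ := by nlinarith [Real.sqrt_nonneg 2, hcpos.le]
      have hnng : 0 ≤ s / n + s' / n := by positivity
      nlinarith
    have e2 : (c / n) * (2 * (c / n)) ≤ 2 * c₁ * (1 / (n : ℝ) ^ 2) := by
      have heq : (c / n) * (2 * (c / n)) = (2 * c ^ 2) * (1 / (n : ℝ) ^ 2) := by
        field_simp
      rw [heq]
      have hnng : (0:ℝ) ≤ 1 / (n : ℝ) ^ 2 := by positivity
      nlinarith
    calc (c / n) * (Real.sqrt 2 * (s + s') + 2 * (c / n))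
        = (c / n) * (Real.sqrt 2 * (s + s')) + (c / n) * (2 * (c / n)) := by ring
      _ ≤ 2 * c₁ * (s / n + s' / n) + 2 * c₁ * (1 / (n : ℝ) ^ 2) := add_le_add e1 e2
      _ = 2 * (c₁ * (s / n + s' / n + 1 / (n : ℝ) ^ 2)) := by ring
  linarith [hdist, key, hrhs]
end

section
/- For every constant c > 0 there exists a constant C > 0 such that the following holds: if n ≥ 1 and x₁, …, x_n ∈ [−1,1] satisfy |arccos x_j − arccos x_k| ≥ c/n for all j ≠ k, then for every k with 1 ≤ k ≤ n and every δ ∈ (0,1], the number of indices j ≠ k with |x_j − x_k| ≤ δ is at most C(δ^{1/2} n + 1). -/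
open Real

lemma sep_count {S : Finset ℕ} {θ : ℕ → ℝ} {ε m L : ℝ} (hε : 0 < ε) (hL : 0 ≤ L)
    (hmem : ∀ j ∈ S, θ j ∈ Set.Icc m (m + L))
    (hsep : ∀ j ∈ S, ∀ k ∈ S, j ≠ k → ε ≤ |θ j - θ k|) :
    (S.card : ℝ) ≤ L / ε + 1 := by
  have key : S.card ≤ ⌊L / ε⌋₊ + 1 := by
    have h := Finset.card_le_card_of_injOn (fun j => ⌊(θ j - m) / ε⌋₊)
      (s := S) (t := Finset.range (⌊L / ε⌋₊ + 1)) ?_ ?_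
    · simpa using h
    · intro j hj
      simp only [Finset.mem_coe, Finset.mem_range, Nat.lt_succ_iff]
      apply Nat.floor_le_floor
      have h1 := (hmem j hj).2
      exact div_le_div_of_nonneg_right (by linarith) hε.le
    · intro j hj j' hj' hEq
      by_contra hne
      have hs := hsep j hj j' hj' hne
      have h0 : 0 ≤ (θ j - m) / ε := div_nonneg (by linarith [(hmem j hj).1]) hε.le
      have h0' : 0 ≤ (θ j' - m) / ε := div_nonneg (by linarith [(hmem j' hj').1]) hε.le
      have a1 : (⌊(θ j - m) / ε⌋₊ : ℝ) ≤ (θ j - m) / ε := Nat.floor_le h0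
      have a2 : (θ j - m) / ε < ⌊(θ j - m) / ε⌋₊ + 1 := Nat.lt_floor_add_one _
      have b1 : (⌊(θ j' - m) / ε⌋₊ : ℝ) ≤ (θ j' - m) / ε := Nat.floor_le h0'
      have b2 : (θ j' - m) / ε < ⌊(θ j' - m) / ε⌋₊ + 1 := Nat.lt_floor_add_one _
      simp only at hEq
      rw [hEq] at a1 a2
      have hlt : |(θ j - m) / ε - (θ j' - m) / ε| < 1 := abs_sub_lt_iff.2 ⟨by linarith, by linarith⟩
      have heq2 : |(θ j - m) / ε - (θ j' - m) / ε| = |θ j - θ j'| / ε := by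
        rw [div_sub_div_same, abs_div, abs_of_pos hε]
        ring_nf
      rw [heq2, div_lt_one hε] at hlt
      linarith
  calc (S.card : ℝ) ≤ (⌊L / ε⌋₊ : ℝ) + 1 := by exact_mod_cast key
    _ ≤ L / ε + 1 := by gcongr; exact Nat.floor_le (by positivity)

lemma sq_le_cos_diff {a b : ℝ} (ha : a ∈ Set.Icc 0 π) (hb : b ∈ Set.Icc 0 π) :
    2 / π ^ 2 * (a - b) ^ 2 ≤ |Real.cos a - Real.cos b| := by
  wlog hle : b ≤ a generalizing a b
  · have := this hb ha (by linarith)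
    rw [abs_sub_comm] at this
    nlinarith [this]
  obtain ⟨ha0, ha1⟩ := ha
  obtain ⟨hb0, hb1⟩ := hb
  have hpi := Real.pi_pos
  set s := (a + b) / 2 with hs
  set d := (a - b) / 2 with hd
  have hd0 : 0 ≤ d := by rw [hd]; linarith
  have hd2 : d ≤ π / 2 := by rw [hd]; linarith
  have hds : d ≤ s := by rw [hd, hs]; linarith
  have hds' : d ≤ π - s := by rw [hd, hs]; linarith
  have hcos : Real.cos b - Real.cos a = 2 * Real.sin s * Real.sin d := by
    rw [Real.cos_sub_cos, show (b - a) / 2 = -d by rw [hd]; ring,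
      show (b + a) / 2 = s by rw [hs]; ring, Real.sin_neg]
    ring
  have hsind : 2 / π * d ≤ Real.sin d := Real.mul_le_sin hd0 hd2
  have hsins : 2 / π * d ≤ Real.sin s := by
    rcases le_or_gt s (π / 2) with h | h
    · exact le_trans (by gcongr) (Real.mul_le_sin (le_trans hd0 hds) h)
    · rw [← Real.sin_pi_sub s]
      exact le_trans (by gcongr) (Real.mul_le_sin (le_trans hd0 hds') (by linarith))
  have habs : |Real.cos a - Real.cos b| = Real.cos b - Real.cos a := by
    rw [abs_sub_comm, abs_of_nonneg]
    have := Real.cos_le_cos_of_nonneg_of_le_pi hb0 ha1 hle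
    linarith
  rw [habs, hcos]
  have hdd : (a - b) ^ 2 = 4 * d ^ 2 := by rw [hd]; ring
  rw [hdd]
  have h1 : (2 / π * d) * (2 / π * d) ≤ Real.sin s * Real.sin d :=
    mul_le_mul hsins hsind (by positivity)
      (Real.sin_nonneg_of_nonneg_of_le_pi (by linarith) (by linarith))
  have heq : 2 / π ^ 2 * (4 * d ^ 2) = 2 * ((2 / π * d) * (2 / π * d)) := by
    field_simp
    ring
  rw [heq]
  linarith

/-- If `x₁, …, x_n ∈ [-1,1]` satisfy `|arccos x_j - arccos x_k| ≥ c/n` for all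
`j ≠ k`, then for each `k` and each `δ ∈ (0,1]`, the number of indices `j ≠ k` with
`|x_j - x_k| ≤ δ` is at most `C(δ^{1/2} n + 1)`, where `C` depends only on `c`. -/
theorem card_close_points_le (c : ℝ) (hc : 0 < c) :
    ∃ C : ℝ, 0 < C ∧ ∀ n : ℕ, 1 ≤ n → ∀ x : ℕ → ℝ,
      (∀ j, 1 ≤ j → j ≤ n → x j ∈ Set.Icc (-1 : ℝ) 1) →
      (∀ j k, 1 ≤ j → j ≤ n → 1 ≤ k → k ≤ n → j ≠ k →
        c / n ≤ |Real.arccos (x j) - Real.arccos (x k)|) →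
      ∀ k, 1 ≤ k → k ≤ n → ∀ δ : ℝ, δ ∈ Set.Ioc (0 : ℝ) 1 →
        (((Finset.Icc 1 n).filter (fun j => j ≠ k ∧ |x j - x k| ≤ δ)).card : ℝ)
          ≤ C * (δ ^ ((1 : ℝ) / 2) * n + 1) := by
  have hpi := Real.pi_pos
  refine ⟨2 * π / c + 1, by positivity, ?_⟩
  intro n hn x hx hsep k hk1 hk2 δ hδ
  obtain ⟨hδ0, hδ1⟩ := hδ
  have hn0 : (0 : ℝ) < n := by exact_mod_cast hn
  set S := (Finset.Icc 1 n).filter (fun j => j ≠ k ∧ |x j - x k| ≤ δ) with hS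
  set θ := fun j => Real.arccos (x j) with hθ
  have hεpos : 0 < c / n := by positivity
  have hclose : ∀ j ∈ S, |θ j - θ k| ≤ π * Real.sqrt δ := by
    intro j hj
    simp only [hS, Finset.mem_filter, Finset.mem_Icc] at hj
    obtain ⟨⟨hj1, hj2⟩, _, hjd⟩ := hj
    have hxj := hx j hj1 hj2
    have hxk := hx k hk1 hk2
    have haj : θ j ∈ Set.Icc 0 π := ⟨Real.arccos_nonneg _, Real.arccos_le_pi _⟩
    have hak : θ k ∈ Set.Icc 0 π := ⟨Real.arccos_nonneg _, Real.arccos_le_pi _⟩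
    have hcj : Real.cos (θ j) = x j := Real.cos_arccos hxj.1 hxj.2
    have hck : Real.cos (θ k) = x k := Real.cos_arccos hxk.1 hxk.2
    have key := sq_le_cos_diff haj hak
    rw [hcj, hck] at key
    have hkd : 2 / π ^ 2 * (θ j - θ k) ^ 2 ≤ δ := key.trans hjd
    have h2 : (θ j - θ k) ^ 2 ≤ π ^ 2 * δ := by
      have hq : (θ j - θ k) ^ 2 = π ^ 2 / 2 * (2 / π ^ 2 * (θ j - θ k) ^ 2) := by
        field_simp
      rw [hq]
      have hpos : 0 < π ^ 2 * δ := by positivity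
      calc π ^ 2 / 2 * (2 / π ^ 2 * (θ j - θ k) ^ 2) ≤ π ^ 2 / 2 * δ := by
            gcongr
        _ ≤ π ^ 2 * δ := by linarith
    calc |θ j - θ k| = Real.sqrt ((θ j - θ k) ^ 2) := (Real.sqrt_sq_eq_abs _).symm
      _ ≤ Real.sqrt (π ^ 2 * δ) := Real.sqrt_le_sqrt h2
      _ = π * Real.sqrt δ := by
          rw [Real.sqrt_mul (by positivity), Real.sqrt_sq hpi.le]
  have hcard : (S.card : ℝ) ≤ (2 * (π * Real.sqrt δ)) / (c / n) + 1 := by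
    apply sep_count (θ := θ) hεpos (by positivity) (m := θ k - π * Real.sqrt δ)
    · intro j hj
      have h := hclose j hj
      rw [abs_le] at h
      constructor
      · linarith [h.2]
      · linarith [h.1]
    · intro j hj j' hj' hne
      simp only [hS, Finset.mem_filter, Finset.mem_Icc] at hj hj'
      exact hsep j j' hj.1.1 hj.1.2 hj'.1.1 hj'.1.2 hne
  have hrw : δ ^ ((1:ℝ)/2) = Real.sqrt δ := (Real.sqrt_eq_rpow δ).symm
  rw [hrw]
  have hexp : (2 * (π * Real.sqrt δ)) / (c / n) = 2 * π / c * (Real.sqrt δ * n) := by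
    field_simp
  rw [hexp] at hcard
  have hsq : 0 ≤ Real.sqrt δ * n := by positivity
  have hcpos : 0 < 2 * π / c := by positivity
  nlinarith [hcard, hsq, hcpos]
end

section
/- Let c > 0 and let {x_{n,k}}_{1≤k≤n, n≥1} be a triangular array of points of [−1,1] such that for every n and all 1 ≤ j, k ≤ n with j ≠ k one has |arccos x_{n,j} − arccos x_{n,k}| ≥ c/n. For δ ∈ (0,1] and 1 ≤ k ≤ n set S_{n,k,δ} := Π_{j ≠ k, |x_{n,j} − x_{n,k}| ≤ δ} |x_{n,j} − x_{n,k}| (an empty product equals 1). Then there exist constants c_δ > 0, defined for all sufficiently small δ > 0, with lim_{δ→0⁺} c_δ = 0, such that for each such δ, liminf_{n→∞} min_{1≤k≤n} S_{n,k,δ}^{1/n} ≥ e^{−c_δ}. -/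
open Filter

/-- `S_{n,k,δ} = ∏_{j ≠ k, |x_{n,j} - x_{n,k}| ≤ δ} |x_{n,j} - x_{n,k}|`
(row `n` consists of `x n 0, …, x n (n-1)`; an empty product equals `1`). -/
noncomputable def closeProd (x : ℕ → ℕ → ℝ) (n k : ℕ) (δ : ℝ) : ℝ :=
  ∏ j ∈ ((Finset.range n).erase k).filter (fun j => |x n j - x n k| ≤ δ),
    |x n j - x n k|

section Aux

open Real

lemma factorial_le_prod_of_distinct' : ∀ (n : ℕ) (S : Finset ℕ), S.card = n →
    (∀ a ∈ S, a ≠ 0) → Nat.factorial n ≤ ∏ a ∈ S, a := by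
  intro n
  induction n with
  | zero => intro S hn _; rw [Finset.card_eq_zero.mp hn]; simp
  | succ n ih =>
    intro S hn hS
    have hne : S.Nonempty := Finset.card_pos.mp (by omega)
    set M := S.max' hne with hM
    have hMS : M ∈ S := S.max'_mem hne
    have hsub : S ⊆ Finset.Icc 1 M := fun a ha =>
      Finset.mem_Icc.mpr ⟨Nat.one_le_iff_ne_zero.mpr (hS a ha), S.le_max' a ha⟩
    have hcard : S.card ≤ M := by
      have := Finset.card_le_card hsub
      simpa [Nat.card_Icc] using this
    have herase : (S.erase M).card = n := by rw [Finset.card_erase_of_mem hMS, hn]; omega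
    have ih' := ih (S.erase M) herase (fun a ha => hS a (Finset.mem_of_mem_erase ha))
    calc Nat.factorial (n+1) = (n+1) * Nat.factorial n := rfl
    _ ≤ M * ∏ a ∈ S.erase M, a := Nat.mul_le_mul (by omega) ih'
    _ = ∏ a ∈ S, a := Finset.mul_prod_erase S id hMS

lemma factorial_le_prod_of_distinct (S : Finset ℕ) (hS : ∀ a ∈ S, a ≠ 0) :
    Nat.factorial S.card ≤ ∏ a ∈ S, a :=
  factorial_le_prod_of_distinct' S.card S rfl hS



lemma choose_le_two_pow' (n k : ℕ) : n.choose k ≤ 2 ^ n := by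
  rcases le_or_gt k n with h | h
  · calc n.choose k ≤ ∑ m ∈ Finset.range (n+1), n.choose m :=
        Finset.single_le_sum (fun i _ => Nat.zero_le _) (Finset.mem_range.mpr (by omega))
    _ = 2 ^ n := Nat.sum_range_choose n
  · rw [Nat.choose_eq_zero_of_lt h]; positivity

lemma factorial_le_two_pow_mul_prod_natAbs (T : Finset ℤ) (hT : ∀ b ∈ T, b ≠ 0) :
    Nat.factorial T.card ≤ 2 ^ T.card * ∏ b ∈ T, b.natAbs := by
  classical
  set P := T.filter (fun b => 0 < b) with hP
  set N := T.filter (fun b => b < 0) with hN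
  have hdisj : Disjoint P N := by
    rw [Finset.disjoint_left]
    intro b hb hb'
    have h1 := (Finset.mem_filter.mp hb).2
    have h2 := (Finset.mem_filter.mp hb').2
    omega
  have hunion : P ∪ N = T := by
    ext b
    simp only [hP, hN, Finset.mem_union, Finset.mem_filter]
    constructor
    · rintro (⟨h, _⟩ | ⟨h, _⟩) <;> exact h
    · intro hb
      have := hT b hb
      rcases lt_trichotomy b 0 with h | h | h
      · exact Or.inr ⟨hb, h⟩
      · exact absurd h this
      · exact Or.inl ⟨hb, h⟩
  have hcard : P.card + N.card = T.card := by
    rw [← hunion, Finset.card_union_of_disjoint hdisj]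
  -- products over P and N
  have hPinj : Set.InjOn Int.natAbs P := by
    intro a ha b hb hab
    have ha' := (Finset.mem_filter.mp ha).2
    have hb' := (Finset.mem_filter.mp hb).2
    omega
  have hNinj : Set.InjOn Int.natAbs N := by
    intro a ha b hb hab
    have ha' := (Finset.mem_filter.mp ha).2
    have hb' := (Finset.mem_filter.mp hb).2
    omega
  have hPbound : Nat.factorial P.card ≤ ∏ b ∈ P, b.natAbs := by
    have h1 : ∏ m ∈ P.image Int.natAbs, m = ∏ b ∈ P, b.natAbs := by
      rw [Finset.prod_image]; exact fun a ha b hb => hPinj ha hb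
    have h2 : (P.image Int.natAbs).card = P.card := Finset.card_image_of_injOn hPinj
    rw [← h1, ← h2]
    refine factorial_le_prod_of_distinct _ (fun a ha => ?_)
    obtain ⟨b, hb, rfl⟩ := Finset.mem_image.mp ha
    have := (Finset.mem_filter.mp hb).2
    omega
  have hNbound : Nat.factorial N.card ≤ ∏ b ∈ N, b.natAbs := by
    have h1 : ∏ m ∈ N.image Int.natAbs, m = ∏ b ∈ N, b.natAbs := by
      rw [Finset.prod_image]; exact fun a ha b hb => hNinj ha hb
    have h2 : (N.image Int.natAbs).card = N.card := Finset.card_image_of_injOn hNinj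
    rw [← h1, ← h2]
    refine factorial_le_prod_of_distinct _ (fun a ha => ?_)
    obtain ⟨b, hb, rfl⟩ := Finset.mem_image.mp ha
    have := (Finset.mem_filter.mp hb).2
    omega
  have hprod : ∏ b ∈ T, b.natAbs = (∏ b ∈ P, b.natAbs) * ∏ b ∈ N, b.natAbs := by
    rw [← hunion, Finset.prod_union hdisj]
  calc Nat.factorial T.card
      = Nat.factorial (P.card + N.card) := by rw [hcard]
    _ = (P.card + N.card).choose P.card * (Nat.factorial P.card * Nat.factorial N.card) := by
        have h := Nat.choose_mul_factorial_mul_factorial (Nat.le_add_right P.card N.card)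
        rw [Nat.add_sub_cancel_left] at h
        rw [← h, mul_assoc]
    _ ≤ 2 ^ T.card * ((∏ b ∈ P, b.natAbs) * ∏ b ∈ N, b.natAbs) := by
        refine Nat.mul_le_mul ?_ (Nat.mul_le_mul hPbound hNbound)
        rw [← hcard]
        exact choose_le_two_pow' _ _
    _ = 2 ^ T.card * ∏ b ∈ T, b.natAbs := by rw [hprod]

lemma pow_self_le_factorial_mul_exp (m : ℕ) :
    (m : ℝ) ^ m ≤ (Nat.factorial m : ℝ) * Real.exp 1 ^ m := by
  induction m with
  | zero => simp
  | succ m ih =>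
    have hstep : ((m : ℝ) + 1) ^ m ≤ (m : ℝ) ^ m * Real.exp 1 := by
      rcases Nat.eq_zero_or_pos m with h | h
      · subst h; simpa using Real.one_le_exp zero_le_one
      · have hm : (0 : ℝ) < m := by positivity
        have h1 : (m : ℝ) + 1 ≤ m * Real.exp (1 / m) := by
          have := Real.add_one_le_exp (1 / (m : ℝ))
          have h2 : (m : ℝ) * (1 / m + 1) ≤ m * Real.exp (1 / m) :=
            mul_le_mul_of_nonneg_left this hm.le
          calc (m : ℝ) + 1 = m * (1 / m + 1) := by field_simp; ring
          _ ≤ m * Real.exp (1 / m) := h2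
        calc ((m : ℝ) + 1) ^ m ≤ (m * Real.exp (1 / m)) ^ m := by
              apply pow_le_pow_left₀ (by positivity) h1
        _ = (m : ℝ) ^ m * Real.exp (1 / m) ^ m := mul_pow _ _ _
        _ = (m : ℝ) ^ m * Real.exp 1 := by
              rw [← Real.exp_nat_mul]
              congr 1
              field_simp
    have hnn : (0 : ℝ) ≤ (m : ℝ) + 1 := by positivity
    calc ((m + 1 : ℕ) : ℝ) ^ (m + 1) = ((m : ℝ) + 1) ^ (m + 1) := by push_cast; ring
    _ = ((m : ℝ) + 1) * ((m : ℝ) + 1) ^ m := by ring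
    _ ≤ ((m : ℝ) + 1) * ((m : ℝ) ^ m * Real.exp 1) := by
        exact mul_le_mul_of_nonneg_left hstep hnn
    _ ≤ ((m : ℝ) + 1) * ((Nat.factorial m : ℝ) * Real.exp 1 ^ m * Real.exp 1) := by
        refine mul_le_mul_of_nonneg_left ?_ hnn
        exact mul_le_mul_of_nonneg_right ih (Real.exp_pos 1).le
    _ = (Nat.factorial (m + 1) : ℝ) * Real.exp 1 ^ (m + 1) := by
        rw [Nat.factorial_succ]
        push_cast
        ring

lemma sq_arccos_le_abs_sub {a b : ℝ} (ha : a ∈ Set.Icc (-1 : ℝ) 1)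
    (hb : b ∈ Set.Icc (-1 : ℝ) 1) :
    2 / π ^ 2 * (Real.arccos a - Real.arccos b) ^ 2 ≤ |a - b| := by
  set α := Real.arccos a with hα
  set β := Real.arccos b with hβ
  have hα0 : 0 ≤ α := Real.arccos_nonneg a
  have hαπ : α ≤ π := Real.arccos_le_pi a
  have hβ0 : 0 ≤ β := Real.arccos_nonneg b
  have hβπ : β ≤ π := Real.arccos_le_pi b
  have hπ : (0 : ℝ) < π := Real.pi_pos
  have hab : a - b = Real.cos α - Real.cos β := by
    rw [hα, hβ, Real.cos_arccos ha.1 ha.2, Real.cos_arccos hb.1 hb.2]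
  set s := (α + β) / 2 with hs
  set d := (α - β) / 2 with hd
  have hs0 : 0 ≤ s := by rw [hs]; linarith
  have hsπ : s ≤ π := by rw [hs]; linarith
  have hdle : |d| ≤ π / 2 := by
    rw [abs_le, hd]; constructor <;> linarith
  have hd0 : (0:ℝ) ≤ |d| := abs_nonneg d
  -- |d| ≤ min s (π - s)
  have hds : |d| ≤ s := by
    rw [abs_le, hd, hs]; constructor <;> linarith
  have hdπs : |d| ≤ π - s := by
    rw [abs_le, hd, hs]; constructor <;> linarith
  -- sin s ≥ (2/π) |d|
  have hsin_s : 2 / π * |d| ≤ Real.sin s := by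
    rcases le_or_gt s (π / 2) with h | h
    · calc 2 / π * |d| ≤ 2 / π * s := by
            apply mul_le_mul_of_nonneg_left hds (by positivity)
      _ ≤ Real.sin s := Real.mul_le_sin hs0 h
    · have h1 : 0 ≤ π - s := by linarith
      have h2 : π - s ≤ π / 2 := by linarith
      calc 2 / π * |d| ≤ 2 / π * (π - s) := by
            apply mul_le_mul_of_nonneg_left hdπs (by positivity)
      _ ≤ Real.sin (π - s) := Real.mul_le_sin h1 h2
      _ = Real.sin s := Real.sin_pi_sub s
  -- |sin d| ≥ (2/π) |d|
  have hsin_d : 2 / π * |d| ≤ |Real.sin d| := by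
    have h1 : Real.sin |d| ≤ |Real.sin d| := by
      rcases abs_cases d with ⟨h, _⟩ | ⟨h, hneg⟩
      · rw [h]; exact le_abs_self _
      · rw [h, Real.sin_neg]
        exact neg_le_abs _
    calc 2 / π * |d| ≤ Real.sin |d| := Real.mul_le_sin hd0 hdle
    _ ≤ |Real.sin d| := h1
  have hsin_s0 : 0 ≤ Real.sin s := Real.sin_nonneg_of_nonneg_of_le_pi hs0 hsπ
  have key : 2 * (2 / π * |d|) * (2 / π * |d|) ≤ 2 * Real.sin s * |Real.sin d| := by
    have h1 : 2 * (2 / π * |d|) ≤ 2 * Real.sin s := by linarith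
    apply mul_le_mul h1 hsin_d (by positivity) (by positivity)
  have heq : |a - b| = 2 * Real.sin s * |Real.sin d| := by
    rw [hab, Real.cos_sub_cos]
    show |-2 * Real.sin s * Real.sin d| = _
    rw [abs_mul, abs_mul]
    rw [abs_of_nonpos (by norm_num : (-2:ℝ) ≤ 0), abs_of_nonneg hsin_s0]
    norm_num
  rw [heq]
  have hfin : 2 / π ^ 2 * (α - β) ^ 2 = 2 * (2 / π * |d|) * (2 / π * |d|) := by
    have h2 : |d| * |d| = d * d := abs_mul_abs_self d
    have hd2 : d * d = (α - β) ^ 2 / 4 := by rw [hd]; ring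
    have h3 : 2 * (2 / π * |d|) * (2 / π * |d|) = 8 / π ^ 2 * (|d| * |d|) := by ring
    rw [h3, h2, hd2]
    field_simp
    ring
  rw [hfin]
  exact key

noncomputable def rhoAux (c δ : ℝ) : ℝ := π * Real.sqrt (2 * δ) / c

noncomputable def cdeltaAux (c δ : ℝ) : ℝ :=
  rhoAux c δ * |Real.log (c ^ 2 / (2 * π ^ 2 * Real.exp 1 ^ 2))|
    - 2 * rhoAux c δ * Real.log (rhoAux c δ)

lemma mul_log_mono {t ρ : ℝ} (ht : 0 < t) (htρ : t ≤ ρ) (hρ : Real.log ρ ≤ -1) :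
    ρ * Real.log ρ ≤ t * Real.log t := by
  have hρ0 : 0 < ρ := lt_of_lt_of_le ht htρ
  have h1 : Real.log (ρ / t) ≤ ρ / t - 1 := Real.log_le_sub_one_of_pos (by positivity)
  have h2 : Real.log (ρ / t) = Real.log ρ - Real.log t := Real.log_div (ne_of_gt hρ0) (ne_of_gt ht)
  have h3 : t * (Real.log ρ - Real.log t) ≤ ρ - t := by
    have h4 := mul_le_mul_of_nonneg_left h1 ht.le
    rw [h2] at h4
    have h5 : t * (ρ / t - 1) = ρ - t := by field_simp
    linarith [h4, h5.le, h5.ge]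
  have h4 : 0 ≤ (ρ - t) * (-1 - Real.log ρ) := mul_nonneg (by linarith) (by linarith)
  nlinarith

lemma floor_lt_floor_of_add_one_le {u v : ℝ} (h : u + 1 ≤ v) : ⌊u⌋ < ⌊v⌋ := by
  have h1 : ⌊u + 1⌋ ≤ ⌊v⌋ := Int.floor_le_floor h
  rw [Int.floor_add_one] at h1
  omega

lemma core_bound (c : ℝ) (hc : 0 < c) (x : ℕ → ℕ → ℝ)
    (hmem : ∀ n, ∀ k < n, x n k ∈ Set.Icc (-1 : ℝ) 1)
    (hsep : ∀ n : ℕ, 1 ≤ n → ∀ j < n, ∀ k < n, j ≠ k →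
      c / n ≤ |Real.arccos (x n j) - Real.arccos (x n k)|)
    (δ : ℝ) (hδ : 0 < δ) (hρe : rhoAux c δ ≤ (Real.exp 1)⁻¹)
    (n k : ℕ) (hn : 1 ≤ n) (hk : k < n) :
    Real.exp (-(cdeltaAux c δ)) ≤ closeProd x n k δ ^ ((n : ℝ)⁻¹) := by
  have hπ : (0 : ℝ) < π := Real.pi_pos
  set K : ℝ := c ^ 2 / (2 * π ^ 2 * Real.exp 1 ^ 2) with hKdef
  have hK : 0 < K := by positivity
  set ρ : ℝ := rhoAux c δ with hρdef
  have hρpos : 0 < ρ := by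
    rw [hρdef, rhoAux]
    have : 0 < Real.sqrt (2 * δ) := Real.sqrt_pos.mpr (by linarith)
    positivity
  have hlogρ : Real.log ρ ≤ -1 := by
    have h := Real.log_le_log hρpos hρe
    rwa [Real.log_inv, Real.log_exp] at h
  have hcδ : cdeltaAux c δ = ρ * |Real.log K| - 2 * ρ * Real.log ρ := rfl
  have hcδpos : 0 < cdeltaAux c δ := by
    rw [hcδ]
    nlinarith [abs_nonneg (Real.log K), hρpos, hlogρ]
  set J := ((Finset.range n).erase k).filter (fun j => |x n j - x n k| ≤ δ) with hJ
  set m := J.card with hm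
  have hnR : (0 : ℝ) < n := by exact_mod_cast Nat.pos_of_ne_zero (by omega)
  have hcloseJ : closeProd x n k δ = ∏ j ∈ J, |x n j - x n k| := rfl
  set θ : ℕ → ℝ := fun j => Real.arccos (x n j) with hθ
  set av : ℕ → ℝ := fun j => (θ j - θ k) * (n / c) with hav
  have hJmem : ∀ j ∈ J, j < n ∧ j ≠ k ∧ |x n j - x n k| ≤ δ := by
    intro j hj
    rw [hJ, Finset.mem_filter, Finset.mem_erase, Finset.mem_range] at hj
    exact ⟨hj.1.2, hj.1.1, hj.2⟩
  -- |av j| ≥ 1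
  have habs1 : ∀ j ∈ J, 1 ≤ |av j| := by
    intro j hj
    have h := hsep n hn j (hJmem j hj).1 k hk (hJmem j hj).2.1
    have hnc : (0 : ℝ) < n / c := by positivity
    calc (1 : ℝ) = c / n * (n / c) := by field_simp
    _ ≤ |θ j - θ k| * (n / c) := mul_le_mul_of_nonneg_right h hnc.le
    _ = |av j| := by rw [hav]; rw [abs_mul, abs_of_pos hnc]
  -- separation of av
  have hsepa : ∀ j ∈ J, ∀ j' ∈ J, j ≠ j' → 1 ≤ |av j - av j'| := by
    intro j hj j' hj' hne
    have h := hsep n hn j (hJmem j hj).1 j' (hJmem j' hj').1 hne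
    have hnc : (0 : ℝ) < n / c := by positivity
    calc (1 : ℝ) = c / n * (n / c) := by field_simp
    _ ≤ |θ j - θ j'| * (n / c) := mul_le_mul_of_nonneg_right h hnc.le
    _ = |av j - av j'| := by
        have heq : av j - av j' = (θ j - θ j') * ((n:ℝ) / c) := by rw [hav]; ring
        rw [heq, abs_mul, abs_of_pos hnc]
  -- upper bound |av j| ≤ ρ * n / 2
  have hup : ∀ j ∈ J, |av j| ≤ ρ * n / 2 := by
    intro j hj
    have h1 : 2 / π ^ 2 * (θ j - θ k) ^ 2 ≤ δ :=
      le_trans (sq_arccos_le_abs_sub (hmem n j (hJmem j hj).1) (hmem n k hk)) (hJmem j hj).2.2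
    have h2 : (θ j - θ k) ^ 2 ≤ π ^ 2 * δ / 2 := by
      have hπ2 : (0:ℝ) < π ^ 2 := by positivity
      have h' := mul_le_mul_of_nonneg_left h1 (by positivity : (0:ℝ) ≤ π ^ 2 / 2)
      calc (θ j - θ k) ^ 2 = π ^ 2 / 2 * (2 / π ^ 2 * (θ j - θ k) ^ 2) := by field_simp
      _ ≤ π ^ 2 / 2 * δ := h'
      _ = π ^ 2 * δ / 2 := by ring
    have hs2 : Real.sqrt (2 * δ) ^ 2 = 2 * δ := Real.sq_sqrt (by linarith)
    have hρsq : (ρ * n / 2) ^ 2 = π ^ 2 * δ / 2 * (n / c) ^ 2 := by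
      rw [hρdef, rhoAux]
      calc (π * Real.sqrt (2 * δ) / c * ↑n / 2) ^ 2
          = Real.sqrt (2 * δ) ^ 2 * (π ^ 2 * (n:ℝ) ^ 2 / (4 * c ^ 2)) := by ring
      _ = 2 * δ * (π ^ 2 * (n:ℝ) ^ 2 / (4 * c ^ 2)) := by rw [hs2]
      _ = π ^ 2 * δ / 2 * ((n:ℝ) / c) ^ 2 := by field_simp; ring
    have h3 : (av j) ^ 2 ≤ (ρ * n / 2) ^ 2 := by
      rw [hρsq, hav]
      have : ((θ j - θ k) * (n / c)) ^ 2 = (θ j - θ k) ^ 2 * (n / c) ^ 2 := by ring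
      rw [this]
      exact mul_le_mul_of_nonneg_right h2 (by positivity)
    have h4 : |av j| = Real.sqrt ((av j) ^ 2) := (Real.sqrt_sq_eq_abs _).symm
    rw [h4]
    calc Real.sqrt ((av j) ^ 2) ≤ Real.sqrt ((ρ * n / 2) ^ 2) := Real.sqrt_le_sqrt h3
    _ = ρ * n / 2 := Real.sqrt_sq (by positivity)
  -- the integer labels
  set g : ℕ → ℤ := fun j => if 0 < av j then ⌊av j⌋ else -⌊-av j⌋ with hg
  have hgprop : ∀ j ∈ J, g j ≠ 0 ∧ |(g j : ℝ)| ≤ |av j| := by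
    intro j hj
    have h1 := habs1 j hj
    by_cases hpos : 0 < av j
    · have habs : |av j| = av j := abs_of_pos hpos
      have hge : 1 ≤ av j := by rw [habs] at h1; exact h1
      have hfl : 1 ≤ ⌊av j⌋ := by
        rw [Int.le_floor]; exact_mod_cast hge
      have hgj : g j = ⌊av j⌋ := by rw [hg]; simp [hpos]
      refine ⟨by rw [hgj]; omega, ?_⟩
      rw [hgj, habs]
      rw [abs_of_nonneg (by exact_mod_cast (by omega : (0:ℤ) ≤ ⌊av j⌋))]
      exact Int.floor_le (av j)
    · push_neg at hpos
      have habs : |av j| = -av j := abs_of_nonpos hpos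
      have hge : 1 ≤ -av j := by rw [habs] at h1; exact h1
      have hfl : 1 ≤ ⌊-av j⌋ := by
        rw [Int.le_floor]; exact_mod_cast hge
      have hgj : g j = -⌊-av j⌋ := by
        rw [hg]; simp [not_lt.mpr hpos]
      refine ⟨by rw [hgj]; omega, ?_⟩
      rw [hgj, habs]
      push_cast
      rw [abs_of_nonpos (by exact_mod_cast (by omega : -⌊-av j⌋ ≤ (0:ℤ)) : (-(⌊-av j⌋:ℝ)) ≤ 0)]
      simpa using Int.floor_le (-av j)
  have hkey : ∀ u v : ℝ, u + 1 ≤ v → 1 ≤ |u| →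
      (if 0 < u then ⌊u⌋ else -⌊-u⌋) < (if 0 < v then ⌊v⌋ else -⌊-v⌋) := by
    intro u v huv hu1
    by_cases hu : 0 < u <;> by_cases hv : 0 < v
    · simp only [if_pos hu, if_pos hv]
      exact floor_lt_floor_of_add_one_le huv
    · exact absurd (by linarith : (0:ℝ) < v) hv
    · -- u ≤ 0 so u ≤ -1, v > 0
      push_neg at hu
      have hu' : u ≤ -1 := by
        rcases abs_cases u with ⟨h, _⟩ | ⟨h, _⟩ <;> linarith [hu1, h.ge, h.le]
      simp only [if_neg (not_lt.mpr hu), if_pos hv]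
      have h1 : 1 ≤ ⌊-u⌋ := by rw [Int.le_floor]; push_cast; linarith
      have h2 : (0:ℤ) ≤ ⌊v⌋ := Int.le_floor.mpr (by push_cast; linarith)
      omega
    · push_neg at hu hv
      simp only [if_neg (not_lt.mpr hu), if_neg (not_lt.mpr hv)]
      have : -v + 1 ≤ -u := by linarith
      have h := floor_lt_floor_of_add_one_le this
      omega
  have hginj : ∀ j ∈ J, ∀ j' ∈ J, g j = g j' → j = j' := by
    intro j hj j' hj' hgeq
    by_contra hne
    have hsep1 := hsepa j hj j' hj' hne
    rcases abs_cases (av j - av j') with ⟨h, _⟩ | ⟨h, _⟩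
    · have : av j' + 1 ≤ av j := by linarith [hsep1, h.ge]
      have hlt := hkey (av j') (av j) this (habs1 j' hj')
      rw [hg] at hgeq
      simp only at hgeq hlt
      omega
    · have : av j + 1 ≤ av j' := by linarith [hsep1, h.ge]
      have hlt := hkey (av j) (av j') this (habs1 j hj)
      rw [hg] at hgeq
      simp only at hgeq hlt
      omega
  -- cardinality bound
  have hcard : (m : ℝ) ≤ ρ * n := by
    set M := ⌊ρ * n / 2⌋ with hMdef
    have hM0 : (0:ℤ) ≤ M := Int.le_floor.mpr (by push_cast; positivity)
    have himg : J.image g ⊆ (Finset.Icc (-M) M).erase 0 := by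
      intro b hb
      obtain ⟨j, hj, rfl⟩ := Finset.mem_image.mp hb
      obtain ⟨hne0, habs⟩ := hgprop j hj
      have hub := hup j hj
      refine Finset.mem_erase.mpr ⟨hne0, Finset.mem_Icc.mpr ⟨?_, ?_⟩⟩
      · have : -(ρ * n / 2) ≤ (g j : ℝ) := by
          have := neg_abs_le ((g j : ℝ))
          linarith [le_trans habs hub]
        rw [neg_le] at this ⊢
        rw [hMdef, Int.le_floor]
        push_cast
        linarith
      · rw [hMdef, Int.le_floor]
        calc ((g j : ℤ) : ℝ) ≤ |(g j : ℝ)| := le_abs_self _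
        _ ≤ ρ * n / 2 := le_trans habs hub
    have h1 : m = (J.image g).card := (Finset.card_image_of_injOn (fun a ha b hb => hginj a ha b hb)).symm
    have h2 : (J.image g).card ≤ ((Finset.Icc (-M) M).erase 0).card := Finset.card_le_card himg
    have h3 : ((Finset.Icc (-M) M).erase 0).card + 1 = (Finset.Icc (-M) M).card :=
      Finset.card_erase_add_one (Finset.mem_Icc.mpr ⟨by omega, hM0⟩)
    have h4 : ((Finset.Icc (-M) M).card : ℤ) = 2 * M + 1 := by
      rw [Int.card_Icc]
      omega
    have h5 : (m : ℤ) ≤ 2 * M := by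
      have h2' : m ≤ ((Finset.Icc (-M) M).erase 0).card := h1 ▸ h2
      omega
    have h6 : (M : ℝ) ≤ ρ * n / 2 := Int.floor_le _
    calc (m : ℝ) ≤ 2 * (M : ℝ) := by exact_mod_cast h5
    _ ≤ ρ * n := by linarith
  -- product lower bound
  have hEfac : ((Nat.factorial m : ℝ) / 2 ^ m) ≤ ∏ j ∈ J, |av j| := by
    have hstep1 : ∏ j ∈ J, |(g j : ℝ)| ≤ ∏ j ∈ J, |av j| :=
      Finset.prod_le_prod (fun j _ => abs_nonneg _) (fun j hj => (hgprop j hj).2)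
    have hstep2 : ∏ j ∈ J, |(g j : ℝ)| = ((∏ b ∈ J.image g, b.natAbs : ℕ) : ℝ) := by
      rw [Finset.prod_image (fun a ha b hb => hginj a ha b hb)]
      push_cast
      apply Finset.prod_congr rfl
      intro j _
      rw [Nat.cast_natAbs]
      push_cast
      rfl
    have hstep3 : Nat.factorial m ≤ 2 ^ m * ∏ b ∈ J.image g, b.natAbs := by
      have hcardim : (J.image g).card = m :=
        Finset.card_image_of_injOn (fun a ha b hb => hginj a ha b hb)
      have := factorial_le_two_pow_mul_prod_natAbs (J.image g) (fun b hb => by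
        obtain ⟨j, hj, rfl⟩ := Finset.mem_image.mp hb
        exact (hgprop j hj).1)
      rwa [hcardim] at this
    rw [div_le_iff₀ (by positivity)]
    calc (Nat.factorial m : ℝ) ≤ 2 ^ m * ((∏ b ∈ J.image g, b.natAbs : ℕ) : ℝ) := by
          exact_mod_cast hstep3
    _ = ((∏ b ∈ J.image g, b.natAbs : ℕ) : ℝ) * 2 ^ m := by ring
    _ ≤ (∏ j ∈ J, |av j|) * 2 ^ m := by
        apply mul_le_mul_of_nonneg_right _ (by positivity)
        rw [← hstep2]; exact hstep1
  have hprodav : ((m : ℝ) / (Real.exp 1 * 2)) ^ m ≤ ∏ j ∈ J, |av j| := by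
    have h1 : ((m:ℝ)/(Real.exp 1 * 2))^m = (m:ℝ)^m / (Real.exp 1 ^ m * 2 ^ m) := by
      rw [div_pow, mul_pow]
    rw [h1]
    rw [div_le_iff₀ (by positivity)]
    have hE2 : (Nat.factorial m : ℝ) ≤ (∏ j ∈ J, |av j|) * 2 ^ m :=
      (div_le_iff₀ (by positivity)).mp hEfac
    calc (m:ℝ)^m ≤ (Nat.factorial m : ℝ) * Real.exp 1 ^ m := pow_self_le_factorial_mul_exp m
    _ ≤ ((∏ j ∈ J, |av j|) * 2 ^ m) * Real.exp 1 ^ m :=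
        mul_le_mul_of_nonneg_right hE2 (by positivity)
    _ = (∏ j ∈ J, |av j|) * (Real.exp 1 ^ m * 2 ^ m) := by ring
  -- main product lower bound
  have hprod2 : (K * ((m:ℝ)/n)^2)^m ≤ closeProd x n k δ := by
    rw [hcloseJ]
    have hstepB : ∏ j ∈ J, (2*c^2/(π^2*(n:ℝ)^2) * (av j)^2) ≤ ∏ j ∈ J, |x n j - x n k| := by
      apply Finset.prod_le_prod
      · intro j _; positivity
      · intro j hj
        have heq : 2*c^2/(π^2*(n:ℝ)^2) * (av j)^2 = 2/π^2 * (θ j - θ k)^2 := by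
          rw [hav]
          field_simp
        rw [heq]
        exact sq_arccos_le_abs_sub (hmem n j (hJmem j hj).1) (hmem n k hk)
    have hstepC : ∏ j ∈ J, (2*c^2/(π^2*(n:ℝ)^2) * (av j)^2)
        = (2*c^2/(π^2*(n:ℝ)^2))^m * (∏ j ∈ J, |av j|)^2 := by
      rw [Finset.prod_mul_distrib, Finset.prod_const]
      congr 1
      rw [← Finset.prod_pow]
      apply Finset.prod_congr rfl
      intro j _
      rw [sq_abs]
    have hsq : (((m:ℝ)/(Real.exp 1*2))^m)^2 ≤ (∏ j ∈ J, |av j|)^2 :=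
      pow_le_pow_left₀ (by positivity) hprodav 2
    have halg : (K * ((m:ℝ)/n)^2)^m
        = (2*c^2/(π^2*(n:ℝ)^2))^m * (((m:ℝ)/(Real.exp 1*2))^m)^2 := by
      rw [pow_right_comm ((m:ℝ)/(Real.exp 1*2)) m 2, ← mul_pow]
      congr 1
      rw [hKdef]
      set E := Real.exp 1 with hE
      have he : E ≠ 0 := by rw [hE]; exact (Real.exp_pos 1).ne'
      field_simp
    calc (K * ((m:ℝ)/n)^2)^m
        = (2*c^2/(π^2*(n:ℝ)^2))^m * (((m:ℝ)/(Real.exp 1*2))^m)^2 := halg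
    _ ≤ (2*c^2/(π^2*(n:ℝ)^2))^m * (∏ j ∈ J, |av j|)^2 :=
        mul_le_mul_of_nonneg_left hsq (by positivity)
    _ = ∏ j ∈ J, (2*c^2/(π^2*(n:ℝ)^2) * (av j)^2) := hstepC.symm
    _ ≤ ∏ j ∈ J, |x n j - x n k| := hstepB
  -- conclude
  rcases Nat.eq_zero_or_pos m with hm0 | hmpos
  · have hJe : J = ∅ := Finset.card_eq_zero.mp hm0
    have h1 : closeProd x n k δ = 1 := by rw [hcloseJ, hJe, Finset.prod_empty]
    rw [h1, Real.one_rpow]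
    exact Real.exp_le_one_iff.mpr (by linarith)
  · set t : ℝ := (m:ℝ)/n with htdef
    have hmR : (0:ℝ) < m := by exact_mod_cast hmpos
    have ht0 : 0 < t := div_pos hmR hnR
    have htρ : t ≤ ρ := by
      rw [htdef, div_le_iff₀ hnR]
      exact hcard
    have hKt : 0 < K * t^2 := mul_pos hK (pow_pos ht0 2)
    have hlow : Real.exp ((m:ℝ) * Real.log (K*t^2)) ≤ closeProd x n k δ := by
      have heq : Real.exp ((m:ℝ) * Real.log (K*t^2)) = (K*t^2)^m := by
        rw [Real.exp_nat_mul, Real.exp_log hKt]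
      rw [heq]
      exact hprod2
    have hrpow : Real.exp ((m:ℝ) * Real.log (K*t^2)) ^ ((n:ℝ)⁻¹)
        ≤ closeProd x n k δ ^ ((n:ℝ)⁻¹) :=
      Real.rpow_le_rpow (Real.exp_pos _).le hlow (by positivity)
    have hexp : Real.exp ((m:ℝ) * Real.log (K*t^2)) ^ ((n:ℝ)⁻¹)
        = Real.exp (t * Real.log (K*t^2)) := by
      rw [← Real.exp_mul]
      congr 1
      rw [htdef]
      ring
    refine le_trans ?_ (hexp ▸ hrpow)
    apply Real.exp_le_exp.mpr
    have hlogKt : Real.log (K*t^2) = Real.log K + 2 * Real.log t := by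
      rw [Real.log_mul (ne_of_gt hK) (pow_ne_zero 2 (ne_of_gt ht0)), Real.log_pow]
      push_cast
      ring
    have hA : -(t * |Real.log K|) ≤ t * Real.log K := by
      have h := mul_le_mul_of_nonneg_left (neg_abs_le (Real.log K)) ht0.le
      linarith [h]
    have hB : t * |Real.log K| ≤ ρ * |Real.log K| :=
      mul_le_mul_of_nonneg_right htρ (abs_nonneg _)
    have hC : ρ * Real.log ρ ≤ t * Real.log t := mul_log_mono ht0 htρ hlogρ
    rw [hcδ, hlogKt]
    have hexpand : t * (Real.log K + 2 * Real.log t)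
        = t * Real.log K + 2 * (t * Real.log t) := by ring
    rw [hexpand]
    linarith only [hA, hB, hC]

lemma rho_facts (c : ℝ) (hc : 0 < c) {δ : ℝ} (hδ : 0 < δ)
    (hδK : δ < c ^ 2 / (2 * π ^ 2 * Real.exp 1 ^ 2)) :
    0 < rhoAux c δ ∧ rhoAux c δ ≤ (Real.exp 1)⁻¹ := by
  have hπ : (0:ℝ) < π := Real.pi_pos
  have he : (0:ℝ) < Real.exp 1 := Real.exp_pos 1
  have hρpos : 0 < rhoAux c δ := by
    rw [rhoAux]
    have : 0 < Real.sqrt (2 * δ) := Real.sqrt_pos.mpr (by linarith)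
    positivity
  refine ⟨hρpos, ?_⟩
  have h1 : rhoAux c δ ^ 2 = π ^ 2 * (2 * δ) / c ^ 2 := by
    rw [rhoAux]
    calc (π * Real.sqrt (2 * δ) / c) ^ 2
        = Real.sqrt (2 * δ) ^ 2 * (π ^ 2 / c ^ 2) := by ring
    _ = 2 * δ * (π ^ 2 / c ^ 2) := by rw [Real.sq_sqrt (by linarith : (0:ℝ) ≤ 2 * δ)]
    _ = π ^ 2 * (2 * δ) / c ^ 2 := by ring
  have h2 : π ^ 2 * (2 * (c ^ 2 / (2 * π ^ 2 * Real.exp 1 ^ 2))) / c ^ 2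
      = ((Real.exp 1)⁻¹) ^ 2 := by
    field_simp
  have hsq : rhoAux c δ ^ 2 ≤ ((Real.exp 1)⁻¹) ^ 2 := by
    rw [h1, ← h2]
    gcongr
  exact le_of_pow_le_pow_left₀ (by norm_num) (by positivity) hsq

end Aux


/-- If a triangular array of points of `[-1,1]` satisfies the separation condition
`|arccos x_{n,j} - arccos x_{n,k}| ≥ c/n` for `j ≠ k`, then there exist constants
`c_δ > 0`, defined for all sufficiently small `δ > 0`, with `c_δ → 0` as `δ → 0⁺`,
such that `liminf_{n→∞} min_{1≤k≤n} S_{n,k,δ}^{1/n} ≥ e^{-c_δ}`. -/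
theorem liminf_min_closeProd_rpow (c : ℝ) (hc : 0 < c) (x : ℕ → ℕ → ℝ)
    (hmem : ∀ n, ∀ k < n, x n k ∈ Set.Icc (-1 : ℝ) 1)
    (hsep : ∀ n : ℕ, 1 ≤ n → ∀ j < n, ∀ k < n, j ≠ k →
      c / n ≤ |Real.arccos (x n j) - Real.arccos (x n k)|) :
    ∃ δ₀ : ℝ, 0 < δ₀ ∧ ∃ cδ : ℝ → ℝ,
      (∀ δ ∈ Set.Ioo (0 : ℝ) δ₀, 0 < cδ δ) ∧
      Tendsto cδ (nhdsWithin 0 (Set.Ioi 0)) (nhds 0) ∧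
      ∀ δ ∈ Set.Ioo (0 : ℝ) δ₀,
        Real.exp (-(cδ δ)) ≤
          Filter.liminf (fun n : ℕ =>
            sInf ((fun k => closeProd x n k δ ^ ((n : ℝ)⁻¹)) '' {k | k < n})) atTop := by
  have hπ : (0 : ℝ) < Real.pi := Real.pi_pos
  have hexp1 : (0 : ℝ) < Real.exp 1 := Real.exp_pos 1
  set K : ℝ := c ^ 2 / (2 * Real.pi ^ 2 * Real.exp 1 ^ 2) with hKdef
  have hK : 0 < K := by positivity
  refine ⟨K, hK, fun δ => cdeltaAux c δ, ?_, ?_, ?_⟩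
  -- positivity of cδ
  · intro δ hδ
    obtain ⟨hρpos, hρe⟩ := rho_facts c hc hδ.1 hδ.2
    have hlogρ : Real.log (rhoAux c δ) ≤ -1 := by
      have h := Real.log_le_log hρpos hρe
      rwa [Real.log_inv, Real.log_exp] at h
    simp only [cdeltaAux]
    nlinarith [abs_nonneg (Real.log (c ^ 2 / (2 * Real.pi ^ 2 * Real.exp 1 ^ 2))),
      hρpos, hlogρ]
  -- tendsto
  · have h1 : Tendsto (rhoAux c) (nhdsWithin 0 (Set.Ioi 0)) (nhds 0) := by
      have hcont : Continuous fun δ : ℝ => Real.pi * Real.sqrt (2 * δ) / c := by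
        fun_prop
      have h := hcont.tendsto 0
      have h0 : Real.pi * Real.sqrt (2 * (0:ℝ)) / c = 0 := by simp
      rw [h0] at h
      exact (h.mono_left nhdsWithin_le_nhds)
    have h2 : Tendsto (rhoAux c) (nhdsWithin 0 (Set.Ioi 0)) (nhdsWithin 0 (Set.Ioi 0)) := by
      rw [tendsto_nhdsWithin_iff]
      refine ⟨h1, ?_⟩
      filter_upwards [self_mem_nhdsWithin] with δ hδ
      have hδ' : (0:ℝ) < δ := hδ
      have : 0 < Real.sqrt (2 * δ) := Real.sqrt_pos.mpr (by linarith)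
      rw [rhoAux]
      have : 0 < Real.pi * Real.sqrt (2 * δ) / c := by positivity
      exact this
    have h3 : Tendsto (fun y : ℝ => Real.log y * y) (nhdsWithin 0 (Set.Ioi 0)) (nhds 0) := by
      have := tendsto_log_mul_rpow_nhdsGT_zero (r := 1) zero_lt_one
      simpa using this
    have h4 : Tendsto (fun δ => Real.log (rhoAux c δ) * rhoAux c δ)
        (nhdsWithin 0 (Set.Ioi 0)) (nhds 0) := h3.comp h2
    have h5 := (h1.mul_const (|Real.log K|)).sub (h4.const_mul 2)
    have h6 : (0:ℝ) * |Real.log K| - 2 * 0 = 0 := by ring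
    rw [h6] at h5
    refine h5.congr (fun δ => ?_)
    simp only [cdeltaAux]
    rw [← hKdef]
    ring
  -- liminf bound
  · intro δ hδ
    obtain ⟨hρpos, hρe⟩ := rho_facts c hc hδ.1 hδ.2
    have hbound : ∀ n : ℕ, 1 ≤ n →
        Real.exp (-(cdeltaAux c δ)) ≤
          sInf ((fun k => closeProd x n k δ ^ ((n : ℝ)⁻¹)) '' {k | k < n}) := by
      intro n hn
      apply le_csInf
      · exact ⟨_, ⟨0, by simp only [Set.mem_setOf_eq]; omega, rfl⟩⟩
      · rintro b ⟨k, hk, rfl⟩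
        exact core_bound c hc x hmem hsep δ hδ.1 hρe n k hn hk
    have hub : ∀ n : ℕ, 1 ≤ n →
        sInf ((fun k => closeProd x n k δ ^ ((n : ℝ)⁻¹)) '' {k | k < n}) ≤ 2 := by
      intro n hn
      have hnR : (0:ℝ) < n := by exact_mod_cast Nat.pos_of_ne_zero (by omega)
      have hcp_nonneg : 0 ≤ closeProd x n 0 δ :=
        Finset.prod_nonneg (fun j _ => abs_nonneg _)
      have hcp_le : closeProd x n 0 δ ≤ 2 ^ n := by
        rw [closeProd]
        calc ∏ j ∈ ((Finset.range n).erase 0).filter (fun j => |x n j - x n 0| ≤ δ),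
              |x n j - x n 0|
            ≤ ∏ _j ∈ ((Finset.range n).erase 0).filter (fun j => |x n j - x n 0| ≤ δ),
              (2:ℝ) := by
              apply Finset.prod_le_prod (fun j _ => abs_nonneg _)
              intro j hj
              have hjn : j < n := by
                have := (Finset.mem_erase.mp (Finset.mem_filter.mp hj).1).2
                exact Finset.mem_range.mp this
              have h1 := hmem n j hjn
              have h2 := hmem n 0 (by omega)
              rw [abs_le]
              constructor <;> [linarith [h1.1, h2.2]; linarith [h1.2, h2.1]]
        _ = (2:ℝ) ^ (((Finset.range n).erase 0).filter
              (fun j => |x n j - x n 0| ≤ δ)).card := Finset.prod_const 2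
        _ ≤ (2:ℝ) ^ n := by
              apply pow_le_pow_right₀ (by norm_num)
              calc (((Finset.range n).erase 0).filter (fun j => |x n j - x n 0| ≤ δ)).card
                  ≤ ((Finset.range n).erase 0).card := Finset.card_filter_le _ _
              _ ≤ (Finset.range n).card := Finset.card_erase_le
              _ = n := Finset.card_range n
      have hel : closeProd x n 0 δ ^ ((n : ℝ)⁻¹) ≤ 2 := by
        have h1 : closeProd x n 0 δ ^ ((n : ℝ)⁻¹) ≤ ((2:ℝ) ^ n) ^ ((n : ℝ)⁻¹) :=
          Real.rpow_le_rpow hcp_nonneg hcp_le (by positivity)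
        have h2 : ((2:ℝ) ^ n) ^ ((n : ℝ)⁻¹) = 2 := by
          rw [← Real.rpow_natCast 2 n, ← Real.rpow_mul (by norm_num),
            mul_inv_cancel₀ (ne_of_gt hnR), Real.rpow_one]
        rw [h2] at h1
        exact h1
      have hmem0 : closeProd x n 0 δ ^ ((n : ℝ)⁻¹) ∈
          ((fun k => closeProd x n k δ ^ ((n : ℝ)⁻¹)) '' {k | k < n}) :=
        ⟨0, by simp only [Set.mem_setOf_eq]; omega, rfl⟩
      have hbdd : BddBelow ((fun k => closeProd x n k δ ^ ((n : ℝ)⁻¹)) '' {k | k < n}) := by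
        refine ⟨0, ?_⟩
        rintro b ⟨k, hk, rfl⟩
        exact Real.rpow_nonneg (Finset.prod_nonneg (fun j _ => abs_nonneg _)) _
      exact le_trans (csInf_le hbdd hmem0) hel
    apply Filter.le_liminf_of_le
    · exact Filter.isCoboundedUnder_ge_of_eventually_le atTop
        ((eventually_ge_atTop 1).mono fun n hn => hub n hn)
    · exact (eventually_ge_atTop 1).mono fun n hn => hbound n hn
end

section
/- Let n ≥ 1 and let p be a polynomial with complex coefficients of degree at most n − 1. Let x ∈ [−1,1] and let ρ := ρ_{1/n}(x) be the distance from x to the ellipse I_{1/n}. Then for every ζ ∈ ℂ with |ζ − x| ≤ ρ/2, |p′(ζ)| ≤ (2e/ρ) · max_{t ∈ [−1,1]} |p(t)|. -/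
open Polynomial Metric Set in
lemma q_eval (m : ℕ) (p : Polynomial ℂ) (hdeg : p.natDegree ≤ m) (u : ℂ) (hu : u ≠ 0) :
    (p.sum fun k a => C (a / 2 ^ k) * (X ^ 2 + 1) ^ k * X ^ (m - k)).eval u
      = u ^ m * p.eval ((u + u⁻¹) / 2) := by
  rw [Polynomial.sum_def, Polynomial.eval_finset_sum, Polynomial.eval_eq_sum,
    Polynomial.sum_def, Finset.mul_sum]
  refine Finset.sum_congr rfl fun k hk => ?_
  have hk' : k ≤ m := le_trans (Polynomial.le_natDegree_of_mem_supp k hk) hdeg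
  have hum : u ^ (m - k) * u ^ k = u ^ m := by rw [← pow_add, Nat.sub_add_cancel hk']
  have h2k : (2 : ℂ) ^ k ≠ 0 := pow_ne_zero _ two_ne_zero
  have huk : u ^ k ≠ 0 := pow_ne_zero _ hu
  have h1 : (u + u⁻¹) ^ k * u ^ k = (u ^ 2 + 1) ^ k := by
    rw [← mul_pow]; congr 1; field_simp
  have h2 : ((u + u⁻¹) / 2) ^ k = (u ^ 2 + 1) ^ k / (2 ^ k * u ^ k) := by
    rw [div_pow, ← h1, mul_comm ((u + u⁻¹) ^ k) (u ^ k), mul_comm ((2:ℂ) ^ k) (u ^ k),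
      mul_div_mul_left _ _ huk]
  simp only [Polynomial.eval_mul, Polynomial.eval_C, Polynomial.eval_pow, Polynomial.eval_add,
    Polynomial.eval_X, Polynomial.eval_one, h2]
  rw [← hum]
  field_simp

open Polynomial Metric Set

/-- Bernstein–Walsh/Cauchy estimate: if `p` is a polynomial of degree at most `n - 1`,
`x ∈ [-1,1]`, `ρ = ρ_{1/n}(x)`, and `|ζ - x| ≤ ρ/2`, then
`|p′(ζ)| ≤ (2e/ρ) max_{t ∈ [-1,1]} |p(t)|`. -/
theorem deriv_bound_near_interval (n : ℕ) (hn : 1 ≤ n) (p : Polynomial ℂ)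
    (hdeg : p.natDegree ≤ n - 1) (x : ℝ) (hx : x ∈ Set.Icc (-1 : ℝ) 1)
    (ζ : ℂ) (hζ : ‖ζ - (x : ℂ)‖ ≤ rho n x / 2) :
    ‖(Polynomial.derivative p).eval ζ‖ ≤ (2 * Real.exp 1 / rho n x) *
      sSup ((fun t : ℝ => ‖p.eval (t : ℂ)‖) '' Set.Icc (-1 : ℝ) 1) := by
  have hn0 : (0:ℝ) < n := by exact_mod_cast hn
  set R : ℝ := 1 + 1 / (n : ℝ) with hRdef
  have h1npos : (0:ℝ) < 1 / (n:ℝ) := by positivity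
  have hR1 : 1 < R := by rw [hRdef]; linarith
  have hR0 : 0 < R := by linarith
  have hRinv1 : 1 / R < 1 := by rw [div_lt_one hR0]; linarith
  have hRinv0 : 0 < 1 / R := by positivity
  set jou : ℂ → ℂ := fun u => (u + u⁻¹) / 2 with hjou
  -- basic facts about jou on the unit sphere
  have hjre : ∀ v : ℂ, ‖v‖ = 1 → jou v = ((v.re : ℝ) : ℂ) := by
    intro v hv
    have hvinv : v⁻¹ = (starRingEnd ℂ) v := by
      rw [Complex.inv_def, Complex.normSq_eq_norm_sq, hv]; simp
    show (v + v⁻¹) / 2 = _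
    rw [hvinv, Complex.add_conj]
    push_cast
    ring
  have hjc : ContinuousOn jou {u : ℂ | u ≠ 0} := by
    intro u hu
    exact ((continuousAt_id.add (continuousAt_inv₀ hu)).div_const 2).continuousWithinAt
  have hKdef : joukowskiEllipse n = jou '' Metric.sphere (0:ℂ) R := by
    ext z
    have hsph : ∀ w : ℂ, w ∈ Metric.sphere (0:ℂ) R ↔ ‖w‖ = 1 + 1/(n:ℝ) := by
      intro w
      rw [mem_sphere_zero_iff_norm, hRdef]
    constructor
    · rintro ⟨w, h1, h2⟩
      exact ⟨w, (hsph w).mpr h1, h2.symm⟩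
    · rintro ⟨w, h1, rfl⟩
      exact ⟨w, (hsph w).mp h1, rfl⟩
  have hKcpt : IsCompact (joukowskiEllipse n) := by
    rw [hKdef]
    refine (isCompact_sphere (0:ℂ) R).image_of_continuousOn (hjc.mono fun u hu => ?_)
    have : ‖u‖ = R := by simpa using hu
    intro h
    rw [h] at this
    simp at this
    linarith
  -- x is not on the ellipse
  set y : ℝ := Real.sqrt (1 - x ^ 2) with hy0
  have hy : x ^ 2 + y ^ 2 = 1 := by
    rw [hy0, Real.sq_sqrt (by nlinarith [hx.1, hx.2])]
    ring
  have habsxy : ‖(x:ℂ) + (y:ℝ) * Complex.I‖ = 1 := by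
    rw [Complex.norm_def, Complex.normSq_add_mul_I, hy, Real.sqrt_one]
  have hxE : (x:ℂ) ∉ joukowskiEllipse n := by
    rintro ⟨w, hw, hwx⟩
    have hw0 : w ≠ 0 := by
      intro h; rw [h, norm_zero] at hw; linarith
    have h3 : w + w⁻¹ = 2 * (x:ℂ) := by rw [hwx]; ring
    have h4 : w * (w + w⁻¹) = w * (2 * (x:ℂ)) := by rw [h3]
    rw [mul_add, mul_inv_cancel₀ hw0] at h4
    have key : ((x:ℂ) + y * Complex.I) * ((x:ℂ) - y * Complex.I) = 1 := by
      have hyC : (x:ℂ) ^ 2 + (y:ℂ) ^ 2 = 1 := by exact_mod_cast congrArg (Complex.ofReal) hy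
      have hI : Complex.I ^ 2 = -1 := Complex.I_sq
      linear_combination hyC - (y:ℂ)^2 * hI - (y:ℂ)^2 * hI * 0
    have hfac : (w - ((x:ℂ) + y * Complex.I)) * (w - ((x:ℂ) - y * Complex.I)) = 0 := by
      linear_combination h4 + key
    have habs1 : ‖w‖ = 1 := by
      rcases mul_eq_zero.mp hfac with h | h
      · rw [sub_eq_zero.mp h]; exact habsxy
      · rw [sub_eq_zero.mp h]
        have : (x:ℂ) - y * Complex.I = (x:ℂ) + (-y : ℝ) * Complex.I := by push_cast; ring
        rw [this, Complex.norm_def, Complex.normSq_add_mul_I]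
        rw [neg_pow, (by norm_num : (-1:ℝ)^2 = 1), one_mul, hy, Real.sqrt_one]
    rw [hw] at habs1
    linarith
  have hKne : (joukowskiEllipse n).Nonempty := by
    refine ⟨((R:ℂ) + (R:ℂ)⁻¹) / 2, (R:ℂ), ?_, rfl⟩
    rw [Complex.norm_real, Real.norm_eq_abs, abs_of_pos hR0]
  have hρ : 0 < rho n x := by
    rw [rho]
    exact (hKcpt.isClosed.notMem_iff_infDist_pos hKne).mp hxE
  set ρ := rho n x with hρdef
  -- the sup M
  set M := sSup ((fun t : ℝ => ‖p.eval (t : ℂ)‖) '' Set.Icc (-1 : ℝ) 1) with hMdef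
  have hcont : Continuous fun t : ℝ => ‖p.eval (t:ℂ)‖ :=
    continuous_norm.comp (p.continuous.comp Complex.continuous_ofReal)
  have hMbdd : BddAbove ((fun t : ℝ => ‖p.eval (t : ℂ)‖) '' Set.Icc (-1 : ℝ) 1) :=
    ((isCompact_Icc).image_of_continuousOn hcont.continuousOn).bddAbove
  have hM : ∀ t : ℝ, t ∈ Set.Icc (-1:ℝ) 1 → ‖p.eval (t:ℂ)‖ ≤ M :=
    fun t ht => le_csSup hMbdd ⟨t, ht, rfl⟩
  have hM0 : 0 ≤ M := le_trans (norm_nonneg _) (hM 1 ⟨by norm_num, le_refl 1⟩)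
  set m := n - 1 with hm
  set q : Polynomial ℂ := p.sum fun k a => C (a / 2 ^ k) * (X ^ 2 + 1) ^ k * X ^ (m - k) with hqdef
  -- bound for q on the unit sphere
  have hqs : ∀ v : ℂ, ‖v‖ = 1 → ‖q.eval v‖ ≤ M := by
    intro v hv
    have hv0 : v ≠ 0 := by intro h; rw [h] at hv; simp at hv
    have := q_eval m p hdeg v hv0
    rw [hqdef, this]
    have hre : (v + v⁻¹) / 2 = ((v.re : ℝ) : ℂ) := hjre v hv
    rw [hre, norm_mul, norm_pow, hv, one_pow, one_mul]
    refine hM v.re (abs_le.mp ?_)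
    calc |v.re| ≤ ‖v‖ := Complex.abs_re_le_norm v
    _ = 1 := hv
  -- bound for q on the closed unit disk via the maximum principle
  have hqd : ∀ v : ℂ, ‖v‖ ≤ 1 → ‖q.eval v‖ ≤ M := by
    intro v hv
    have h1 : ∀ z ∈ frontier (Metric.ball (0:ℂ) 1), ‖q.eval z‖ ≤ M := by
      rw [frontier_ball (0:ℂ) one_ne_zero]
      intro z hz
      exact hqs z (by simpa using mem_sphere_zero_iff_norm.mp hz)
    have h2 : v ∈ closure (Metric.ball (0:ℂ) 1) := by
      rw [closure_ball (0:ℂ) one_ne_zero]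
      exact mem_closedBall_zero_iff.mpr (by simpa using hv)
    have := Complex.norm_le_of_forall_mem_frontier_norm_le isBounded_ball
      (q.differentiable.diffContOnCl) h1 h2
    simpa using this
  -- key Bernstein--Walsh-type bound
  have key : ∀ u : ℂ, 1 / R < ‖u‖ → ‖u‖ ≤ 1 →
      ‖p.eval (jou u)‖ ≤ Real.exp 1 * M := by
    intro u h1 h2
    have hup : 0 < ‖u‖ := lt_trans hRinv0 h1
    have hu0 : u ≠ 0 := by
      intro h; rw [h] at hup; simp at hup
    have hq := q_eval m p hdeg u hu0
    have habs : ‖u‖ ^ m * ‖p.eval (jou u)‖ ≤ M := by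
      have : ‖q.eval u‖ ≤ M := hqd u h2
      rw [hqdef, hq, norm_mul, norm_pow] at this
      exact this
    have hmpos : 0 < ‖u‖ ^ m := pow_pos hup m
    have hp1 : ‖p.eval (jou u)‖ ≤ M / ‖u‖ ^ m := by
      rw [le_div_iff₀ hmpos]
      calc ‖p.eval (jou u)‖ * ‖u‖ ^ m
          = ‖u‖ ^ m * ‖p.eval (jou u)‖ := by ring
        _ ≤ M := habs
    have hRu : 1 ≤ R * ‖u‖ := by
      have := (div_lt_iff₀ hR0).mp h1
      linarith [this]
    have hp2 : M / ‖u‖ ^ m ≤ M * R ^ m := by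
      rw [div_le_iff₀ hmpos]
      calc M = M * 1 := (mul_one M).symm
        _ ≤ M * (R * ‖u‖) ^ m := by
            refine mul_le_mul_of_nonneg_left ?_ hM0
            exact one_le_pow₀ hRu
        _ = M * R ^ m * ‖u‖ ^ m := by rw [mul_pow]; ring
    have hRm : R ^ m ≤ Real.exp 1 := by
      have h1n : R ≤ Real.exp (1 / (n:ℝ)) := by
        have := Real.add_one_le_exp (1 / (n:ℝ))
        rw [hRdef]; linarith
      calc R ^ m ≤ R ^ n := pow_le_pow_right₀ (by linarith) (Nat.sub_le n 1)
        _ ≤ (Real.exp (1/(n:ℝ))) ^ n := pow_le_pow_left₀ (by linarith) h1n n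
        _ = Real.exp 1 := by
            rw [← Real.exp_nat_mul]
            congr 1
            field_simp
    calc ‖p.eval (jou u)‖ ≤ M / ‖u‖ ^ m := hp1
      _ ≤ M * R ^ m := hp2
      _ ≤ M * Real.exp 1 := mul_le_mul_of_nonneg_left hRm hM0
      _ = Real.exp 1 * M := mul_comm _ _
  -- the open annulus A
  set A : Set ℂ := {u : ℂ | 1 / R < ‖u‖ ∧ ‖u‖ < R} with hAdef
  have hA0 : ∀ u ∈ A, u ≠ 0 := by
    intro u hu h
    rw [hAdef] at hu
    rw [h] at hu
    simp at hu
    linarith [hu.1]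
  have hAopen : IsOpen A := by
    have : A = (‖·‖) ⁻¹' (Set.Ioo (1/R) R) := rfl
    rw [this]
    exact isOpen_Ioo.preimage continuous_norm
  have hAconn : IsPreconnected A := by
    have hconn : IsConnected (Set.Ioo (1/R) R ×ˢ Metric.sphere (0:ℂ) 1) := by
      refine (isConnected_Ioo ?_).prod
        (isConnected_sphere ?_ 0 zero_le_one)
      · linarith
      · rw [Complex.rank_real_complex]; norm_num
    have himg : (fun pr : ℝ × ℂ => pr.1 • pr.2) '' (Set.Ioo (1/R) R ×ˢ Metric.sphere (0:ℂ) 1)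
        = A := by
      ext u
      constructor
      · rintro ⟨⟨r, v⟩, ⟨hr, hv⟩, rfl⟩
        have hv1 : ‖v‖ = 1 := by simpa using hv
        have hr0 : 0 < r := lt_trans hRinv0 hr.1
        have : ‖r • v‖ = r := by
          rw [norm_smul, hv1, mul_one, Real.norm_eq_abs,
            abs_of_pos hr0]
        exact ⟨by rw [this]; exact hr.1, by rw [this]; exact hr.2⟩
      · intro hu
        have hu0 : u ≠ 0 := hA0 u hu
        have hn0' : ‖u‖ ≠ 0 := norm_ne_zero_iff.mpr hu0
        refine ⟨(‖u‖, ‖u‖⁻¹ • u), ⟨?_, ?_⟩, ?_⟩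
        · rw [Set.mem_Ioo]
          exact ⟨by simpa using hu.1, by simpa using hu.2⟩
        · rw [mem_sphere_zero_iff_norm, norm_smul, norm_inv, norm_norm, inv_mul_cancel₀ hn0']
        · show ‖u‖ • (‖u‖⁻¹ • u) = u
          rw [smul_smul, mul_inv_cancel₀ hn0', one_smul]
    rw [← himg]
    exact (hconn.image _ (continuous_fst.smul continuous_snd).continuousOn).isPreconnected
  have hjouA : AnalyticOnNhd ℂ jou A := by
    refine DifferentiableOn.analyticOnNhd ?_ hAopen
    intro u hu
    exact ((differentiableAt_id.add (differentiableAt_inv (hA0 u hu))).div_const 2).differentiableWithinAt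
  set V := jou '' A with hVdef
  have hVopen : IsOpen V := by
    rcases hjouA.is_constant_or_isOpen hAconn with ⟨c, hc⟩ | hopen
    · exfalso
      set s : ℝ := (1 + R) / 2 with hs
      have hs1 : 1 < s := by rw [hs]; linarith
      have hsR : s < R := by rw [hs]; linarith
      have h1A : (1:ℂ) ∈ A := by
        refine ⟨?_, ?_⟩ <;> rw [norm_one]
        · exact hRinv1
        · exact hR1
      have hsA : (s:ℂ) ∈ A := by
        have : ‖(s:ℂ)‖ = s := by
          rw [Complex.norm_real, Real.norm_eq_abs, abs_of_pos (by linarith)]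
        constructor <;> rw [this] <;> linarith
      have e1 : jou 1 = 1 := by show ((1:ℂ) + 1⁻¹)/2 = 1; norm_num
      have e2 : jou (s:ℂ) = (((s + s⁻¹)/2 : ℝ) : ℂ) := by
        show ((s:ℂ) + (s:ℂ)⁻¹)/2 = _
        push_cast
        ring
      have := (hc 1 h1A).trans (hc (s:ℂ) hsA).symm
      rw [e1, e2] at this
      have hreal : (s + s⁻¹) / 2 = 1 := by exact_mod_cast this.symm
      have hs0 : (0:ℝ) < s := by linarith
      have hss : s * s⁻¹ = 1 := mul_inv_cancel₀ (ne_of_gt hs0)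
      nlinarith [sq_nonneg (s - 1)]
    · exact hopen A Subset.rfl hAopen
  have hxV : (x:ℂ) ∈ V := by
    refine ⟨(x:ℂ) + (y:ℝ) * Complex.I, ⟨?_, ?_⟩, ?_⟩
    · rw [habsxy]; exact hRinv1
    · rw [habsxy]; exact hR1
    · rw [hjre _ habsxy]
      simp
  -- frontier V is contained in the ellipse
  set Acl : Set ℂ := {u : ℂ | 1 / R ≤ ‖u‖ ∧ ‖u‖ ≤ R} with hAcldef
  have hAcl0 : ∀ u ∈ Acl, u ≠ 0 := by
    intro u hu h
    rw [hAcldef] at hu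
    rw [h] at hu
    simp at hu
    linarith [hu.1]
  have hAclcl : IsClosed Acl := by
    have : Acl = (‖·‖) ⁻¹' (Set.Icc (1/R) R) := rfl
    rw [this]
    exact isClosed_Icc.preimage continuous_norm
  have hAclcpt : IsCompact Acl := by
    refine (isCompact_closedBall (0:ℂ) R).of_isClosed_subset hAclcl ?_
    intro u hu
    exact mem_closedBall_zero_iff.mpr (by simpa using hu.2)
  have hJcpt : IsCompact (jou '' Acl) :=
    hAclcpt.image_of_continuousOn (hjc.mono fun u hu => hAcl0 u hu)
  have hclV : closure V ⊆ jou '' Acl := by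
    refine closure_minimal ?_ hJcpt.isClosed
    exact Set.image_mono (fun u hu => ⟨le_of_lt hu.1, le_of_lt hu.2⟩)
  have hfr : frontier V ⊆ joukowskiEllipse n := by
    intro z hz
    rw [hVopen.frontier_eq] at hz
    obtain ⟨u, ⟨hu1, hu2⟩, rfl⟩ := hclV hz.1
    have hu0 : u ≠ 0 := hAcl0 u ⟨hu1, hu2⟩
    by_cases hR' : ‖u‖ = R
    · exact ⟨u, hR', rfl⟩
    · have hult : ‖u‖ < R := lt_of_le_of_ne hu2 hR'
      by_cases hr' : ‖u‖ = 1/R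
      · refine ⟨u⁻¹, ?_, ?_⟩
        · rw [norm_inv, hr', one_div, inv_inv]
        · show jou u = (u⁻¹ + u⁻¹⁻¹) / 2
          rw [inv_inv, hjou]
          ring
      · exfalso
        exact hz.2 ⟨u, ⟨lt_of_le_of_ne hu1 (Ne.symm hr'), hult⟩, rfl⟩
  -- the ball of radius ρ around x is inside V
  have hball : Metric.ball (x:ℂ) ρ ⊆ V := by
    refine IsPreconnected.subset_left_of_subset_union hVopen
      isClosed_closure.isOpen_compl
      (disjoint_compl_right.mono_left subset_closure) ?_ ?_
      ((convex_ball _ _).isPreconnected)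
    · intro z hz
      by_cases hzV : z ∈ V
      · exact Or.inl hzV
      · refine Or.inr fun hzc => ?_
        have hzfr : z ∈ frontier V := by
          rw [hVopen.frontier_eq]
          exact ⟨not_not.mp (by simpa using hzc), hzV⟩
        have hzK : z ∈ joukowskiEllipse n := hfr hzfr
        have : ρ ≤ dist (x:ℂ) z := Metric.infDist_le_dist_of_mem hzK
        rw [dist_comm] at this
        exact absurd (Metric.mem_ball.mp hz) (not_lt.mpr this)
    · exact ⟨(x:ℂ), Metric.mem_ball_self hρ, hxV⟩
  -- bound for p on the ball, then on the closed ball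
  have hpball : ∀ z ∈ Metric.ball (x:ℂ) ρ, ‖p.eval z‖ ≤ Real.exp 1 * M := by
    intro z hz
    obtain ⟨u, ⟨hu1, hu2⟩, rfl⟩ := hball hz
    by_cases h : ‖u‖ ≤ 1
    · exact key u hu1 h
    · have hu0 : u ≠ 0 := hA0 u ⟨hu1, hu2⟩
      have hup : 0 < ‖u‖ := norm_pos_iff.mpr hu0
      have hsame : jou u = jou u⁻¹ := by
        show (u + u⁻¹)/2 = (u⁻¹ + u⁻¹⁻¹)/2
        rw [inv_inv]; ring
      rw [hsame]
      refine key u⁻¹ ?_ ?_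
      · rw [norm_inv, one_div]
        exact inv_strictAnti₀ hup hu2
      · rw [norm_inv]
        exact inv_le_one_of_one_le₀ (by linarith [not_le.mp h])
  have hpcb : ∀ z ∈ Metric.closedBall (x:ℂ) ρ, ‖p.eval z‖ ≤ Real.exp 1 * M := by
    intro z hz
    rw [← closure_ball (x:ℂ) (ne_of_gt hρ)] at hz
    have hsub : closure (Metric.ball (x:ℂ) ρ) ⊆ {z : ℂ | ‖p.eval z‖ ≤ Real.exp 1 * M} := by
      refine closure_minimal hpball (isClosed_le ?_ continuous_const)
      exact continuous_norm.comp p.continuous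
    exact hsub hz
  -- Cauchy estimate
  have hρ2 : (0:ℝ) < ρ / 2 := by linarith
  have hsph : ∀ z ∈ Metric.sphere ζ (ρ/2), ‖p.eval z‖ ≤ Real.exp 1 * M := by
    intro z hz
    refine hpcb z ?_
    rw [Metric.mem_closedBall]
    have h1 : dist z ζ = ρ/2 := Metric.mem_sphere.mp hz
    have h2 : dist ζ (x:ℂ) ≤ ρ/2 := by
      rw [Complex.dist_eq]
      exact hζ
    calc dist z (x:ℂ) ≤ dist z ζ + dist ζ (x:ℂ) := dist_triangle _ _ _
      _ ≤ ρ/2 + ρ/2 := by rw [h1]; linarith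
      _ = ρ := by ring
  have hcau := Complex.norm_deriv_le_of_forall_mem_sphere_norm_le hρ2
    (p.differentiable.diffContOnCl) hsph
  rw [Polynomial.deriv] at hcau
  calc ‖(Polynomial.derivative p).eval ζ‖ ≤ (Real.exp 1 * M) / (ρ/2) := hcau
    _ = (2 * Real.exp 1 / ρ) * M := by
        field_simp
end
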